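/- arXiv:2509.10232 — 8 statements merged into one kernel-verified Lean document; each statement's English description precedes it below -/
import Mathlib

section
/- Let M be a symmetric n×n matrix over F_2 with rank at least 2. Then M contains a 2×2 principal submatrix of rank 2. -/
/-- Any symmetric matrix over `F₂` of rank at least 2 has a `2 × 2` principal
submatrix of rank 2. -/
theorem exists_principal_2x2_rank_two {n : ℕ}
    (M : Matrix (Fin n) (Fin n) (ZMod 2)) (hM : M.IsSymm) (h : 2 ≤ M.rank) :
    ∃ f : Fin 2 → Fin n, Function.Injective f ∧ (M.submatrix f f).rank = 2 := by
  by_contra hc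
  push_neg at hc
  -- show every entry satisfies M i j = M i i * M j j
  have key : ∀ i j, M i j = M i i * M j j := by
    intro i j
    rcases eq_or_ne i j with rfl | hij
    · have : ∀ x : ZMod 2, x = x * x := by decide
      exact this _
    · set f : Fin 2 → Fin n := ![i, j] with hf
      have hfinj : Function.Injective f := by
        intro a b hab
        fin_cases a <;> fin_cases b <;> simp only [hf, Matrix.cons_val_zero,
          Matrix.cons_val_one, Matrix.head_cons] at hab <;>
          first | rfl | exact absurd hab hij | exact absurd hab.symm hij
      have hdet : (M.submatrix f f).det = 0 := by
        by_contra hd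
        have hu : IsUnit (M.submatrix f f).det := isUnit_iff_ne_zero.mpr hd
        have := Matrix.rank_of_isUnit _ ((Matrix.isUnit_iff_isUnit_det _).mpr hu)
        simp [Fintype.card_fin] at this
        exact hc f hfinj this
      rw [Matrix.det_fin_two] at hdet
      simp only [Matrix.submatrix_apply, hf, Matrix.cons_val_zero, Matrix.cons_val_one,
        Matrix.head_cons] at hdet
      have hsym : M j i = M i j := by
        conv_lhs => rw [← hM]
        rfl
      rw [hsym] at hdet
      have hsq : ∀ x y : ZMod 2, x - y * y = 0 → y = x := by decide
      exact hsq _ _ hdet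
  -- hence M = vecMulVec d d with rank ≤ 1
  have hMeq : M = Matrix.vecMulVec (fun i => M i i) (fun i => M i i) := by
    ext i j
    exact key i j
  have hle : M.rank ≤ 1 := by
    rw [hMeq, Matrix.vecMulVec_eq (Fin 1)]
    calc (Matrix.replicateCol (Fin 1) (fun i => M i i) * Matrix.replicateRow (Fin 1) fun i => M i i).rank
        ≤ (Matrix.replicateCol (Fin 1) (fun i => M i i)).rank := Matrix.rank_mul_le_left _ _
      _ ≤ Fintype.card (Fin 1) := Matrix.rank_le_card_width _
      _ = 1 := by simp
  omega
end

section
/- Let A be a symmetric n×n matrix over F_2 of rank r. Then there exists an r×r principal submatrix of A having rank r. -/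
open Submodule Set Matrix

private lemma rank_submatrix_col_select {K : Type*} [Field K] {m n r : ℕ}
    (M : Matrix (Fin m) (Fin n) K) (g : Fin r → Fin n)
    (hspan : span K (Set.range (Mᵀ ∘ g)) = span K (Set.range Mᵀ)) :
    (M.submatrix id g).rank = M.rank := by
  rw [Matrix.rank_eq_finrank_span_cols, Matrix.rank_eq_finrank_span_cols]
  rw [show Set.range (M.submatrix id g).col = Set.range (Mᵀ ∘ g) from rfl, hspan,
    show Set.range M.col = Set.range Mᵀ from rfl]

/-- A symmetric matrix over `F₂` of rank `r` has an `r × r` principal submatrix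
of rank `r`. -/
theorem exists_principal_fullrank_submatrix {n r : ℕ}
    (A : Matrix (Fin n) (Fin n) (ZMod 2)) (hA : A.IsSymm) (hr : A.rank = r) :
    ∃ f : Fin r → Fin n, Function.Injective f ∧ (A.submatrix f f).rank = r := by
  classical
  set v : Fin n → (Fin n → ZMod 2) := Aᵀ with hv
  obtain ⟨b, hb₁, hb₂, hb₃⟩ := exists_linearIndependent (ZMod 2) (Set.range v)
  have hbfin : b.Finite := (Set.finite_range v).subset hb₁
  haveI : Fintype b := hbfin.fintype
  have hcard : Fintype.card b = r := by
    have h1 : Module.finrank (ZMod 2) (span (ZMod 2) b) = b.toFinset.card :=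
      finrank_span_set_eq_card hb₃
    have h2 : Module.finrank (ZMod 2) (span (ZMod 2) b) = r := by
      rw [hb₂, show Set.range v = Set.range A.col from rfl, ← Matrix.rank_eq_finrank_span_cols, hr]
    rw [h2] at h1
    rw [Set.toFinset_card] at h1
    omega
  let e : Fin r ≃ b := (Fintype.equivFinOfCardEq hcard).symm
  have hmem : ∀ i : Fin r, (e i : Fin n → ZMod 2) ∈ Set.range v := fun i => hb₁ (e i).2
  let g : Fin r → Fin n := fun i => (hmem i).choose
  have hvg : ∀ i, v (g i) = (e i : Fin n → ZMod 2) := fun i => (hmem i).choose_spec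
  have hginj : Function.Injective g := by
    intro i j hij
    have : (e i : Fin n → ZMod 2) = (e j : Fin n → ZMod 2) := by rw [← hvg i, ← hvg j, hij]
    exact e.injective (Subtype.ext this)
  have hrange : Set.range (v ∘ g) = b := by
    ext x
    constructor
    · rintro ⟨i, rfl⟩
      simp only [Function.comp_apply, hvg]
      exact (e i).2
    · rintro hx
      exact ⟨e.symm ⟨x, hx⟩, by simp [hvg]⟩
  -- rank of A.submatrix id g is r
  have h1 : (A.submatrix id g).rank = r := by
    rw [rank_submatrix_col_select A g (by rw [show Aᵀ ∘ g = v ∘ g from rfl, hrange, hb₂]), hr]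
  -- by symmetry, rank of A.submatrix g id is r
  have htr : (A.submatrix g id)ᵀ = A.submatrix id g := by
    ext i j
    simp [Matrix.submatrix, hA.apply]
  have h2 : (A.submatrix g id).rank = r := by
    rw [← Matrix.rank_transpose, htr, h1]
  -- now select columns g from B := A.submatrix g id
  have hgg : (A.submatrix g id).submatrix id g = A.submatrix g g := rfl
  -- span of selected columns of B equals span of all columns of B
  set P : (Fin n → ZMod 2) →ₗ[ZMod 2] (Fin r → ZMod 2) := LinearMap.funLeft (ZMod 2) (ZMod 2) g with hP
  have hcolB : ((A.submatrix g id))ᵀ = P ∘ v := by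
    ext j i
    rfl
  have hspanB : span (ZMod 2) (Set.range ((A.submatrix g id)ᵀ ∘ g)) =
      span (ZMod 2) (Set.range (A.submatrix g id)ᵀ) := by
    rw [hcolB]
    have e1 : Set.range ((⇑P ∘ v) ∘ g) = ⇑P '' (Set.range (v ∘ g)) :=
      Set.range_comp ⇑P (v ∘ g)
    have e2 : Set.range (P ∘ v) = P '' (Set.range v) := Set.range_comp P v
    rw [e1, e2, ← Submodule.map_span, ← Submodule.map_span, hrange, hb₂]
  have h3 : (A.submatrix g g).rank = r := by
    rw [← hgg, rank_submatrix_col_select _ g hspanB, h2]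
  exact ⟨g, hginj, h3⟩
end

section
/- Let A be an n×n symmetric matrix over F_2 of rank k. Then either A = X·Xᵀ for some n×k matrix X over F_2 of rank k, or A = X·Xᵀ for some n×(k+1) matrix X over F_2 of rank k and k is even. -/
open Matrix Module Submodule LinearMap Finset

abbrev F2 := ZMod 2

lemma F2.eq_one {x : F2} (h : x ≠ 0) : x = 1 := by revert h; revert x; decide

lemma F2.add_self (x : F2) : x + x = 0 := by revert x; decide

lemma F2.sq (x : F2) : x * x = x := by revert x; decide

variable {n m : ℕ}

/-- outer product -/
def op (v w : Fin n → F2) : Matrix (Fin n) (Fin n) F2 := Matrix.of fun i j => v i * w j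

@[simp] lemma op_apply (v w : Fin n → F2) (i j : Fin n) : op v w i j = v i * w j := rfl

lemma op_mulVec (v w x : Fin n → F2) : (op v w).mulVec x = (w ⬝ᵥ x) • v := by
  ext l
  simp only [op, mulVec, dotProduct, Pi.smul_apply, smul_eq_mul, Matrix.of_apply]
  rw [Finset.sum_mul]
  congr 1; ext j; ring

lemma op_add_left (u v w : Fin n → F2) : op (u + v) w = op u w + op v w := by
  ext i j; simp [op]; ring

lemma op_add_right (u v w : Fin n → F2) : op u (v + w) = op u v + op u w := by
  ext i j; simp [op]; ring

lemma op_self_add_op_self (v w : Fin n → F2) :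
    op (v + w) (v + w) = op v v + op v w + op w v + op w w := by
  ext i j; simp [op]; ring

lemma op_transpose (v w : Fin n → F2) : (op v w)ᵀ = op w v := by
  ext i j; simp [op, mul_comm]

/-- append a column -/
def snocCol (X : Matrix (Fin n) (Fin m) F2) (v : Fin n → F2) :
    Matrix (Fin n) (Fin (m + 1)) F2 := Matrix.of fun i => Fin.snoc (X i) (v i)

lemma snocCol_mul_transpose (X Y : Matrix (Fin n) (Fin m) F2) (v w : Fin n → F2) :
    snocCol X v * (snocCol Y w)ᵀ = X * Yᵀ + op v w := by
  ext i j
  simp [snocCol, Matrix.mul_apply, Fin.sum_univ_castSucc, op]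

lemma snocCol_mulVec (X : Matrix (Fin n) (Fin m) F2) (v : Fin n → F2) (c : Fin (m+1) → F2) :
    (snocCol X v).mulVec c = X.mulVec (fun j => c j.castSucc) + c (Fin.last m) • v := by
  ext l
  simp [snocCol, mulVec, dotProduct, Fin.sum_univ_castSucc, mul_comm]

/-- add a vector to every column -/
def addCol (X : Matrix (Fin n) (Fin m) F2) (c : Fin n → F2) :
    Matrix (Fin n) (Fin m) F2 := Matrix.of fun i j => X i j + c i

lemma addCol_mulVec (X : Matrix (Fin n) (Fin m) F2) (c : Fin n → F2) (x : Fin m → F2) :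
    (addCol X c).mulVec x = X.mulVec x + (∑ j, x j) • c := by
  ext l
  simp only [addCol, mulVec, dotProduct, Matrix.of_apply, Pi.add_apply, Pi.smul_apply,
    smul_eq_mul]
  rw [Finset.sum_mul, ← Finset.sum_add_distrib]
  congr 1; ext j; ring

lemma row_sum_eq_zero {X : Matrix (Fin n) (Fin m) F2} (h : X.mulVec 1 = 0) (i : Fin n) :
    ∑ l, X i l = 0 := by
  have := congrFun h i
  simpa [mulVec, dotProduct] using this

lemma addCol_mul_transpose (X : Matrix (Fin n) (Fin m) F2) (c : Fin n → F2)
    (h1 : X.mulVec 1 = 0) (hm : ((m : ℕ) : F2) = 1) :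
    addCol X c * (addCol X c)ᵀ = X * Xᵀ + op c c := by
  ext i j
  have hi := row_sum_eq_zero h1 i
  have hj := row_sum_eq_zero h1 j
  simp only [addCol, Matrix.mul_apply, Matrix.transpose_apply, Matrix.of_apply, op_apply,
    Matrix.add_apply]
  have : ∀ l, (X i l + c i) * (X j l + c j)
      = X i l * X j l + (c j * X i l + c i * X j l + c i * c j) := by intro l; ring
  rw [Finset.sum_congr rfl fun l _ => this l, Finset.sum_add_distrib]
  congr 1
  rw [Finset.sum_add_distrib, Finset.sum_add_distrib, ← Finset.mul_sum, ← Finset.mul_sum,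
    hi, hj, Finset.sum_const]
  simp only [mul_zero, zero_add, add_zero, Finset.card_univ, Fintype.card_fin, nsmul_eq_mul]
  rw [hm, one_mul]

lemma finrank_sup_span {U : Submodule F2 (Fin n → F2)} {v : Fin n → F2} (hv : v ∉ U) :
    finrank F2 ↥(U ⊔ span F2 {v}) = finrank F2 ↥U + 1 := by
  have hv0 : v ≠ 0 := fun h => hv (h ▸ U.zero_mem)
  have hd : Disjoint U (span F2 {v}) := (Submodule.disjoint_span_singleton' hv0).mpr hv
  have h := Submodule.finrank_sup_add_finrank_inf_eq U (span F2 {v})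
  rw [hd.eq_bot, finrank_bot, add_zero, finrank_span_singleton hv0] at h
  exact h

lemma rank_nullity (X : Matrix (Fin n) (Fin m) F2) :
    X.rank + finrank F2 ↥(LinearMap.ker X.mulVecLin) = m := by
  have := LinearMap.finrank_range_add_finrank_ker X.mulVecLin
  rwa [finrank_pi, Fintype.card_fin] at this

lemma ker_eq_bot_of_rank (X : Matrix (Fin n) (Fin m) F2) (h : X.rank = m) :
    LinearMap.ker X.mulVecLin = ⊥ := by
  have h2 := rank_nullity X
  rw [h] at h2
  have : finrank F2 ↥(LinearMap.ker X.mulVecLin) = 0 := by omega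
  exact Submodule.finrank_eq_zero.mp this

lemma rank_of_ker_bot (X : Matrix (Fin n) (Fin m) F2)
    (h : LinearMap.ker X.mulVecLin = ⊥) : X.rank = m := by
  have h2 := rank_nullity X
  rw [h, finrank_bot] at h2
  omega

lemma ker_eq_span_one (X : Matrix (Fin n) (Fin (m+1)) F2) (hr : X.rank = m)
    (h1 : X.mulVec 1 = 0) :
    LinearMap.ker X.mulVecLin = span F2 {(1 : Fin (m+1) → F2)} := by
  have hone : (1 : Fin (m+1) → F2) ≠ 0 := by
    intro h
    have := congrFun h 0
    simp at this
  have hle : span F2 {(1 : Fin (m+1) → F2)} ≤ LinearMap.ker X.mulVecLin := by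
    rw [span_le, Set.singleton_subset_iff]
    simpa [LinearMap.mem_ker] using h1
  have h2 := rank_nullity X
  rw [hr] at h2
  refine (Submodule.eq_of_le_of_finrank_eq hle ?_).symm
  rw [finrank_span_singleton hone]
  omega

lemma one_mem_ker_iff (X : Matrix (Fin n) (Fin m) F2) :
    X.mulVec 1 = 0 ↔ (1 : Fin m → F2) ∈ LinearMap.ker X.mulVecLin := by
  simp [LinearMap.mem_ker]

lemma range_eq_of_factor {X : Matrix (Fin n) (Fin m) F2} {A : Matrix (Fin n) (Fin n) F2}
    (hXA : A = X * Xᵀ) (hr : X.rank = A.rank) :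
    LinearMap.range X.mulVecLin = LinearMap.range A.mulVecLin := by
  have hle : LinearMap.range A.mulVecLin ≤ LinearMap.range X.mulVecLin := by
    rintro y ⟨x, rfl⟩
    exact ⟨Xᵀ.mulVec x, by rw [Matrix.mulVecLin_apply, Matrix.mulVec_mulVec, ← hXA, Matrix.mulVecLin_apply]⟩
  exact (Submodule.eq_of_le_of_finrank_eq hle (by rw [← Matrix.rank, ← Matrix.rank, hr])).symm

lemma matrix_add_self (M : Matrix (Fin n) (Fin n) F2) : M + M = 0 := by
  ext i j; exact F2.add_self _

lemma cast_succ_even {r : ℕ} (h : Even r) : ((r + 1 : ℕ) : F2) = 1 := by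
  have h0 : ((r : ℕ) : F2) = 0 := (ZMod.natCast_eq_zero_iff r 2).mpr h.two_dvd
  push_cast
  rw [h0, zero_add]

lemma diag_step (A : Matrix (Fin n) (Fin n) F2) (hA : A.IsSymm) (i : Fin n) (hii : A i i = 1) :
    ∃ (A' : Matrix (Fin n) (Fin n) F2) (v : Fin n → F2),
      A'.IsSymm ∧ A = A' + op v v ∧ v ∉ LinearMap.range A'.mulVecLin ∧
      A'.rank + 1 = A.rank := by
  classical
  obtain ⟨v, hv⟩ : ∃ v, v = A i := ⟨_, rfl⟩
  obtain ⟨A', hA'⟩ : ∃ A', A' = A + op v v := ⟨_, rfl⟩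
  have hvi : v i = 1 := by rw [hv]; exact hii
  have hsymm' : A'.IsSymm := by
    apply Matrix.IsSymm.ext
    intro l m
    simp only [hA', Matrix.add_apply, op_apply]
    rw [hA.apply l m, mul_comm]
  have hrow : ∀ l, A' i l = 0 := by
    intro l
    simp only [hA', Matrix.add_apply, op_apply]
    rw [hvi, one_mul, hv]
    exact F2.add_self _
  have hAeq : A = A' + op v v := by
    rw [hA', add_assoc, matrix_add_self, add_zero]
  have hcoord : ∀ y ∈ LinearMap.range A'.mulVecLin, y i = 0 := by
    rintro y ⟨x, rfl⟩
    simp only [Matrix.mulVecLin_apply, Matrix.mulVec, dotProduct]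
    rw [Finset.sum_eq_zero]
    intro l _
    rw [hrow l, zero_mul]
  have hv_not : v ∉ LinearMap.range A'.mulVecLin := by
    intro hmem
    have h0 := hcoord v hmem
    rw [hvi] at h0
    exact one_ne_zero h0
  refine ⟨A', v, hsymm', hAeq, hv_not, ?_⟩
  have hvA : A.mulVec (Pi.single i 1) = v := by
    rw [Matrix.mulVec_single_one, Matrix.col, hA.eq, hv]
  have hv_memA : v ∈ LinearMap.range A.mulVecLin := ⟨Pi.single i 1, hvA⟩
  have hle1 : LinearMap.range A.mulVecLin ≤
      LinearMap.range A'.mulVecLin ⊔ span F2 {v} := by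
    rintro y ⟨x, rfl⟩
    rw [Submodule.mem_sup]
    refine ⟨A'.mulVec x, ⟨x, rfl⟩, (v ⬝ᵥ x) • v,
      Submodule.smul_mem _ _ (Submodule.subset_span rfl), ?_⟩
    rw [Matrix.mulVecLin_apply, hAeq, Matrix.add_mulVec, op_mulVec]
  have hle2 : span F2 {v} ≤ LinearMap.range A.mulVecLin := by
    rw [span_le, Set.singleton_subset_iff]; exact hv_memA
  have hle3 : LinearMap.range A'.mulVecLin ≤ LinearMap.range A.mulVecLin := by
    rintro y ⟨x, rfl⟩
    have h1 : A'.mulVec x = A.mulVec x + (v ⬝ᵥ x) • v := by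
      rw [hA', Matrix.add_mulVec, op_mulVec]
    rw [Matrix.mulVecLin_apply, h1]
    exact Submodule.add_mem _ ⟨x, rfl⟩ (Submodule.smul_mem _ _ hv_memA)
  have hrange : LinearMap.range A.mulVecLin =
      LinearMap.range A'.mulVecLin ⊔ span F2 {v} :=
    le_antisymm hle1 (sup_le hle3 hle2)
  have hr : A.rank = finrank F2 ↥(LinearMap.range A.mulVecLin) := rfl
  rw [hr, hrange, finrank_sup_span hv_not]
  rfl

lemma alt_step (A : Matrix (Fin n) (Fin n) F2) (hA : A.IsSymm) (i j : Fin n)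
    (hij1 : A i j = 1) (hdiag : ∀ l, A l l = 0) :
    ∃ (A' : Matrix (Fin n) (Fin n) F2) (a b : Fin n → F2),
      A'.IsSymm ∧ (∀ l, A' l l = 0) ∧ A = A' + (op a b + op b a) ∧
      a i = 0 ∧ a j = 1 ∧ b i = 1 ∧ b j = 0 ∧
      (∀ y ∈ LinearMap.range A'.mulVecLin, y i = 0 ∧ y j = 0) ∧
      A'.rank + 2 = A.rank := by
  classical
  obtain ⟨a, ha⟩ : ∃ a, a = A i := ⟨_, rfl⟩
  obtain ⟨b, hb⟩ : ∃ b, b = A j := ⟨_, rfl⟩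
  obtain ⟨A', hA'⟩ : ∃ A', A' = A + (op a b + op b a) := ⟨_, rfl⟩
  have hai : a i = 0 := by rw [ha]; exact hdiag i
  have haj : a j = 1 := by rw [ha]; exact hij1
  have hbi : b i = 1 := by rw [hb]; rw [hA.apply i j]; exact hij1
  have hbj : b j = 0 := by rw [hb]; exact hdiag j
  have happ : ∀ l m, A' l m = A l m + (a l * b m + b l * a m) := by
    intro l m
    rw [hA']
    simp [Matrix.add_apply]
  have hsymm' : A'.IsSymm := by
    apply Matrix.IsSymm.ext
    intro l m
    rw [happ, happ, hA.apply l m]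
    ring
  have hdiag' : ∀ l, A' l l = 0 := by
    intro l
    rw [happ, hdiag l, mul_comm (b l) (a l), F2.add_self, add_zero]
  have hrowi : ∀ l, A' i l = 0 := by
    intro l
    rw [happ, hai, hbi, zero_mul, one_mul, zero_add, ha]
    exact F2.add_self _
  have hrowj : ∀ l, A' j l = 0 := by
    intro l
    rw [happ, haj, hbj, zero_mul, one_mul, add_zero, hb]
    exact F2.add_self _
  have hAeq : A = A' + (op a b + op b a) := by
    rw [hA', add_assoc, matrix_add_self, add_zero]
  have hcoord : ∀ y ∈ LinearMap.range A'.mulVecLin, y i = 0 ∧ y j = 0 := by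
    rintro y ⟨x, rfl⟩
    constructor
    · simp only [Matrix.mulVecLin_apply, Matrix.mulVec, dotProduct]
      exact Finset.sum_eq_zero fun l _ => by rw [hrowi l, zero_mul]
    · simp only [Matrix.mulVecLin_apply, Matrix.mulVec, dotProduct]
      exact Finset.sum_eq_zero fun l _ => by rw [hrowj l, zero_mul]
  refine ⟨A', a, b, hsymm', hdiag', hAeq, hai, haj, hbi, hbj, hcoord, ?_⟩
  -- rank computation
  have haA : a ∈ LinearMap.range A.mulVecLin :=
    ⟨Pi.single i 1, by rw [Matrix.mulVecLin_apply, Matrix.mulVec_single_one, Matrix.col, hA.eq, ha]⟩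
  have hbA : b ∈ LinearMap.range A.mulVecLin :=
    ⟨Pi.single j 1, by rw [Matrix.mulVecLin_apply, Matrix.mulVec_single_one, Matrix.col, hA.eq, hb]⟩
  have hmv : ∀ (M : Matrix (Fin n) (Fin n) F2) (x : Fin n → F2),
      (M + (op a b + op b a)).mulVec x
        = M.mulVec x + ((b ⬝ᵥ x) • a + (a ⬝ᵥ x) • b) := by
    intro M x
    rw [Matrix.add_mulVec, Matrix.add_mulVec, op_mulVec, op_mulVec]
  have ha_not : a ∉ LinearMap.range A'.mulVecLin := by
    intro hmem
    have h0 := (hcoord a hmem).2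
    rw [haj] at h0
    exact one_ne_zero h0
  have hb_not : b ∉ LinearMap.range A'.mulVecLin ⊔ span F2 {a} := by
    intro hmem
    rw [Submodule.mem_sup] at hmem
    obtain ⟨y, hy, z, hz, hyz⟩ := hmem
    obtain ⟨c, rfl⟩ := Submodule.mem_span_singleton.mp hz
    have h0 : b i = y i + c * a i := by rw [← hyz]; simp
    rw [hbi, (hcoord y hy).1, hai, mul_zero, add_zero] at h0
    exact one_ne_zero h0
  have hle1 : LinearMap.range A.mulVecLin ≤
      (LinearMap.range A'.mulVecLin ⊔ span F2 {a}) ⊔ span F2 {b} := by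
    rintro y ⟨x, rfl⟩
    rw [Submodule.mem_sup]
    refine ⟨A'.mulVec x + (b ⬝ᵥ x) • a, ?_, (a ⬝ᵥ x) • b,
      Submodule.smul_mem _ _ (Submodule.subset_span rfl), ?_⟩
    · rw [Submodule.mem_sup]
      exact ⟨A'.mulVec x, ⟨x, rfl⟩, (b ⬝ᵥ x) • a,
        Submodule.smul_mem _ _ (Submodule.subset_span rfl), rfl⟩
    · rw [Matrix.mulVecLin_apply, hAeq, hmv, add_assoc]
  have hle2 : LinearMap.range A'.mulVecLin ≤ LinearMap.range A.mulVecLin := by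
    rintro y ⟨x, rfl⟩
    have h1 : A'.mulVec x = A.mulVec x + ((b ⬝ᵥ x) • a + (a ⬝ᵥ x) • b) := by
      rw [hA', hmv]
    rw [Matrix.mulVecLin_apply, h1]
    exact Submodule.add_mem _ ⟨x, rfl⟩
      (Submodule.add_mem _ (Submodule.smul_mem _ _ haA) (Submodule.smul_mem _ _ hbA))
  have hrange : LinearMap.range A.mulVecLin =
      (LinearMap.range A'.mulVecLin ⊔ span F2 {a}) ⊔ span F2 {b} := by
    refine le_antisymm hle1 (sup_le (sup_le hle2 ?_) ?_)
    · rw [span_le, Set.singleton_subset_iff]; exact haA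
    · rw [span_le, Set.singleton_subset_iff]; exact hbA
  have hr : A.rank = finrank F2 ↥(LinearMap.range A.mulVecLin) := rfl
  rw [hr, hrange, finrank_sup_span hb_not, finrank_sup_span ha_not]
  rfl

lemma F2.eq_of_add_eq_zero {x y : F2} (h : x + y = 0) : x = y := by revert h; revert x y; decide

lemma F2.quad (x y : F2) : x + y + x + y = 0 := by revert x y; decide

lemma F2.cancel' (u s x y : F2) : u + s * (x + y) + s * x + s * y = u := by
  revert u s x y; decide

lemma F2.cancel (s x y : F2) : s * (x + y) + s * x + s * y = 0 := by revert s x y; decide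

lemma vec_eq_of_add_eq_zero {u w : Fin n → F2} (h : u + w = 0) : u = w :=
  funext fun l => F2.eq_of_add_eq_zero (congrFun h l)

lemma stepC1 {r : ℕ} (A A' : Matrix (Fin n) (Fin n) F2) (v : Fin n → F2)
    (hAeq : A = A' + op v v) (hv_not : v ∉ LinearMap.range A'.mulVecLin)
    (X' : Matrix (Fin n) (Fin r) F2) (hX'r : X'.rank = r) (hX'A : A' = X' * X'ᵀ)
    (hA'r : A'.rank = r) :
    ∃ X : Matrix (Fin n) (Fin (r+1)) F2, X.rank = r + 1 ∧ A = X * Xᵀ := by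
  have hrangeX : LinearMap.range X'.mulVecLin = LinearMap.range A'.mulVecLin :=
    range_eq_of_factor hX'A (by rw [hX'r, hA'r])
  refine ⟨snocCol X' v, ?_, ?_⟩
  · apply rank_of_ker_bot
    rw [eq_bot_iff]
    intro c hc
    rw [LinearMap.mem_ker, Matrix.mulVecLin_apply, snocCol_mulVec] at hc
    have hxv : X'.mulVec (fun j => c j.castSucc) = c (Fin.last r) • v :=
      vec_eq_of_add_eq_zero hc
    have hlast : c (Fin.last r) = 0 := by
      by_contra h
      rw [F2.eq_one h, one_smul] at hxv
      exact hv_not (hrangeX ▸ ⟨fun j => c j.castSucc,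
        by rw [Matrix.mulVecLin_apply]; exact hxv⟩)
    rw [hlast, zero_smul] at hxv
    have hker : (fun j => c j.castSucc) ∈ LinearMap.ker X'.mulVecLin := by
      rw [LinearMap.mem_ker, Matrix.mulVecLin_apply]; exact hxv
    rw [ker_eq_bot_of_rank X' hX'r, Submodule.mem_bot] at hker
    rw [Submodule.mem_bot]
    funext p
    refine Fin.lastCases ?_ (fun q => ?_) p
    · exact hlast
    · exact congrFun hker q
  · rw [snocCol_mul_transpose, ← hX'A]; exact hAeq

lemma stepC2 {r : ℕ} (A A' : Matrix (Fin n) (Fin n) F2) (v : Fin n → F2)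
    (hAeq : A = A' + op v v) (hv_not : v ∉ LinearMap.range A'.mulVecLin)
    (X' : Matrix (Fin n) (Fin (r+1)) F2) (hX'r : X'.rank = r) (hX'A : A' = X' * X'ᵀ)
    (hX'1 : X'.mulVec 1 = 0) (hEven : Even r) (hA'r : A'.rank = r) :
    ∃ X : Matrix (Fin n) (Fin (r+1)) F2, X.rank = r + 1 ∧ A = X * Xᵀ := by
  have hodd := cast_succ_even hEven
  have hrangeX : LinearMap.range X'.mulVecLin = LinearMap.range A'.mulVecLin :=
    range_eq_of_factor hX'A (by rw [hX'r, hA'r])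
  refine ⟨addCol X' v, ?_, ?_⟩
  · apply rank_of_ker_bot
    rw [eq_bot_iff]
    intro c hc
    rw [LinearMap.mem_ker, Matrix.mulVecLin_apply, addCol_mulVec] at hc
    have hxv : X'.mulVec c = (∑ q, c q) • v := vec_eq_of_add_eq_zero hc
    have hs : (∑ q, c q) = 0 := by
      by_contra h
      rw [F2.eq_one h, one_smul] at hxv
      exact hv_not (hrangeX ▸ ⟨c, by rw [Matrix.mulVecLin_apply]; exact hxv⟩)
    rw [hs, zero_smul] at hxv
    have hker : c ∈ LinearMap.ker X'.mulVecLin := by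
      rw [LinearMap.mem_ker, Matrix.mulVecLin_apply]; exact hxv
    rw [ker_eq_span_one X' hX'r hX'1] at hker
    obtain ⟨γ, rfl⟩ := Submodule.mem_span_singleton.mp hker
    have hγ : (∑ q : Fin (r+1), (γ • (1 : Fin (r+1) → F2)) q) = γ := by
      simp only [Pi.smul_apply, Pi.one_apply, smul_eq_mul, mul_one, Finset.sum_const,
        Finset.card_univ, Fintype.card_fin, nsmul_eq_mul]
      rw [hodd, one_mul]
    rw [hγ] at hs
    rw [Submodule.mem_bot, hs, zero_smul]
  · rw [addCol_mul_transpose X' v hX'1 hodd, ← hX'A]; exact hAeq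

lemma snocCol_mulVec_one (X : Matrix (Fin n) (Fin m) F2) (v : Fin n → F2) :
    (snocCol X v).mulVec 1 = X.mulVec 1 + v := by
  ext l
  simp [snocCol, mulVec, dotProduct, Fin.sum_univ_castSucc]

lemma altConstruct {r : ℕ} (A A' : Matrix (Fin n) (Fin n) F2) (a b : Fin n → F2) (i j : Fin n)
    (hAeq : A = A' + (op a b + op b a))
    (hai : a i = 0) (haj : a j = 1) (hbi : b i = 1) (hbj : b j = 0)
    (hcoord : ∀ y ∈ LinearMap.range A'.mulVecLin, y i = 0 ∧ y j = 0)
    (X' : Matrix (Fin n) (Fin (r+1)) F2) (hX'r : X'.rank = r) (hX'A : A' = X' * X'ᵀ)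
    (hX'1 : X'.mulVec 1 = 0) (hEven : Even r) (hA'r : A'.rank = r) :
    ∃ X : Matrix (Fin n) (Fin (r+1+1+1)) F2,
      X.rank = r + 1 + 1 ∧ A = X * Xᵀ ∧ X.mulVec 1 = 0 := by
  have hodd := cast_succ_even hEven
  have hrangeX : LinearMap.range X'.mulVecLin = LinearMap.range A'.mulVecLin :=
    range_eq_of_factor hX'A (by rw [hX'r, hA'r])
  have hsum1 : (∑ _q : Fin (r+1), (1:F2)) = 1 := by
    simp only [Finset.sum_const, Finset.card_univ, Fintype.card_fin, nsmul_eq_mul, mul_one]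
    exact hodd
  have hX''1 : (addCol X' (a+b)).mulVec 1 = a + b := by
    rw [addCol_mulVec, hX'1]
    rw [show (∑ q : Fin (r+1), (1 : Fin (r+1) → F2) q) = 1 from hsum1]
    rw [one_smul, zero_add]
  refine ⟨snocCol (snocCol (addCol X' (a+b)) a) b, ?_, ?_, ?_⟩
  · -- rank
    have hker : LinearMap.ker (snocCol (snocCol (addCol X' (a+b)) a) b).mulVecLin
        = span F2 {(1 : Fin (r+1+1+1) → F2)} := by
      apply le_antisymm
      · intro c hc
        simp only [LinearMap.mem_ker, Matrix.mulVecLin_apply, snocCol_mulVec,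
          addCol_mulVec] at hc
        set s := ∑ q : Fin (r + 1), c q.castSucc.castSucc with hs
        set α := c (Fin.last (r + 1)).castSucc with hα
        set β := c (Fin.last (r + 1 + 1)) with hβ
        have hy_mem : (X' *ᵥ fun q => c q.castSucc.castSucc)
            ∈ LinearMap.range A'.mulVecLin := by
          rw [← hrangeX]
          exact ⟨fun q => c q.castSucc.castSucc, by rw [Matrix.mulVecLin_apply]⟩
        obtain ⟨hyi, hyj⟩ := hcoord _ hy_mem
        have hαs : s = α := by
          have h0 := congrFun hc j
          simp only [Pi.add_apply, Pi.smul_apply, smul_eq_mul, Pi.zero_apply,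
            haj, hbj, hyj, mul_one, mul_zero, one_mul, zero_mul, add_zero, zero_add] at h0
          exact F2.eq_of_add_eq_zero h0
        have hβs : s = β := by
          have h0 := congrFun hc i
          simp only [Pi.add_apply, Pi.smul_apply, smul_eq_mul, Pi.zero_apply,
            hai, hbi, hyi, mul_one, mul_zero, one_mul, zero_mul, add_zero, zero_add] at h0
          exact F2.eq_of_add_eq_zero h0
        have hy0 : X' *ᵥ (fun q => c q.castSucc.castSucc) = 0 := by
          funext l
          have h0 := congrFun hc l
          rw [← hαs, ← hβs] at h0
          simp only [Pi.add_apply, Pi.smul_apply, smul_eq_mul, Pi.zero_apply] at h0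
          rw [F2.cancel'] at h0
          exact h0
        have hker' : (fun q => c q.castSucc.castSucc) ∈ LinearMap.ker X'.mulVecLin := by
          rw [LinearMap.mem_ker, Matrix.mulVecLin_apply]
          exact hy0
        rw [ker_eq_span_one X' hX'r hX'1] at hker'
        obtain ⟨γ, hγ⟩ := Submodule.mem_span_singleton.mp hker'
        have hcc : ∀ q : Fin (r+1), c q.castSucc.castSucc = γ := by
          intro q
          have h0 := congrFun hγ q
          simpa using h0.symm
        have hsγ : s = γ := by
          rw [hs, Finset.sum_congr rfl fun q _ => hcc q]
          simp only [Finset.sum_const, Finset.card_univ, Fintype.card_fin, nsmul_eq_mul]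
          rw [hodd, one_mul]
        refine Submodule.mem_span_singleton.mpr ⟨γ, ?_⟩
        funext p
        refine Fin.lastCases ?_ (fun q => ?_) p
        · simp only [Pi.smul_apply, Pi.one_apply, smul_eq_mul, mul_one]
          rw [← hβ, ← hβs, hsγ]
        · refine Fin.lastCases ?_ (fun q' => ?_) q
          · simp only [Pi.smul_apply, Pi.one_apply, smul_eq_mul, mul_one]
            rw [← hα, ← hαs, hsγ]
          · simp only [Pi.smul_apply, Pi.one_apply, smul_eq_mul, mul_one]
            exact (hcc q').symm
      · rw [span_le, Set.singleton_subset_iff]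
        simp only [SetLike.mem_coe, LinearMap.mem_ker, Matrix.mulVecLin_apply]
        rw [snocCol_mulVec_one, snocCol_mulVec_one, hX''1]
        funext l
        simp only [Pi.add_apply, Pi.zero_apply]
        exact F2.quad (a l) (b l)
    have h2 := rank_nullity (snocCol (snocCol (addCol X' (a+b)) a) b)
    rw [hker, finrank_span_singleton (fun h => one_ne_zero (congrFun h 0))] at h2
    omega
  · -- product
    rw [snocCol_mul_transpose, snocCol_mul_transpose,
      addCol_mul_transpose X' (a+b) hX'1 hodd, ← hX'A, hAeq]
    ext l m
    simp only [Matrix.add_apply, op_apply, Pi.add_apply]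
    have h2 : (2 : F2) = 0 := rfl
    linear_combination (-(a l * a m + b l * b m)) * h2
  · -- mulVec one
    rw [snocCol_mulVec_one, snocCol_mulVec_one, hX''1]
    funext l
    simp only [Pi.add_apply, Pi.zero_apply]
    exact F2.quad (a l) (b l)

lemma alt_C1_trivial {r : ℕ} (A' : Matrix (Fin n) (Fin n) F2) (hdiag : ∀ l, A' l l = 0)
    (X' : Matrix (Fin n) (Fin r) F2) (hX'r : X'.rank = r) (hX'A : A' = X' * X'ᵀ) :
    r = 0 ∧ A' = 0 := by
  have hrowsum : X'.mulVec 1 = 0 := by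
    funext l
    have h := hdiag l
    rw [hX'A] at h
    simp only [Matrix.mul_apply, Matrix.transpose_apply] at h
    simp only [Matrix.mulVec, dotProduct, Pi.one_apply, mul_one, Pi.zero_apply]
    rw [← h]
    exact Finset.sum_congr rfl fun q _ => (F2.sq _).symm
  have h1 : (1 : Fin r → F2) ∈ LinearMap.ker X'.mulVecLin := by
    rw [LinearMap.mem_ker, Matrix.mulVecLin_apply]; exact hrowsum
  rw [ker_eq_bot_of_rank X' hX'r, Submodule.mem_bot] at h1
  have hr0 : r = 0 := by
    by_contra h
    exact one_ne_zero (congrFun h1 ⟨0, Nat.pos_of_ne_zero h⟩)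
  subst hr0
  refine ⟨rfl, ?_⟩
  rw [hX'A]
  ext l m
  simp [Matrix.mul_apply]

theorem master (n : ℕ) : ∀ (k : ℕ) (A : Matrix (Fin n) (Fin n) F2), A.IsSymm → A.rank = k →
    (∃ X : Matrix (Fin n) (Fin k) F2, X.rank = k ∧ A = X * Xᵀ) ∨
    (Even k ∧ ∃ X : Matrix (Fin n) (Fin (k+1)) F2,
        X.rank = k ∧ A = X * Xᵀ ∧ X.mulVec 1 = 0) := by
  intro k
  induction k using Nat.strong_induction_on with
  | _ k IH =>
  intro A hA hk
  by_cases hA0 : A = 0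
  · subst hA0
    have hk0 : k = 0 := by rw [← hk]; exact Matrix.rank_zero
    subst hk0
    left
    refine ⟨0, Matrix.rank_zero, ?_⟩
    ext l m
    simp [Matrix.mul_apply]
  by_cases hdiag : ∃ i, A i i ≠ 0
  · obtain ⟨i, hi⟩ := hdiag
    obtain ⟨A', v, hA'symm, hAeq, hv_not, hstep⟩ := diag_step A hA i (F2.eq_one hi)
    have hlt : A'.rank < k := by omega
    have hk' : k = A'.rank + 1 := by omega
    subst hk'
    rcases IH A'.rank hlt A' hA'symm rfl with ⟨X', hX'r, hX'A⟩ | ⟨hEv, X', hX'r, hX'A, hX'1⟩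
    · exact Or.inl (stepC1 A A' v hAeq hv_not X' hX'r hX'A rfl)
    · exact Or.inl (stepC2 A A' v hAeq hv_not X' hX'r hX'A hX'1 hEv rfl)
  · push_neg at hdiag
    obtain ⟨i, j, hij⟩ : ∃ i j, A i j ≠ 0 := by
      by_contra h
      push_neg at h
      apply hA0
      ext l m
      simp [h l m]
    obtain ⟨A', a, b, hA'symm, hdiag', hAeq, hai, haj, hbi, hbj, hcoord, hstep⟩ :=
      alt_step A hA i j (F2.eq_one hij) hdiag
    have hlt : A'.rank < k := by omega
    have hC2 : Even A'.rank ∧ ∃ X' : Matrix (Fin n) (Fin (A'.rank+1)) F2,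
        X'.rank = A'.rank ∧ A' = X' * X'ᵀ ∧ X'.mulVec 1 = 0 := by
      rcases IH A'.rank hlt A' hA'symm rfl with ⟨X', hX'r, hX'A⟩ | ⟨hEv, hrest⟩
      · obtain ⟨hr0, hA'0⟩ := alt_C1_trivial A' hdiag' X' hX'r hX'A
        refine ⟨by rw [hr0]; exact Even.zero, 0, ?_, ?_, ?_⟩
        · rw [Matrix.rank_zero, hr0]
        · rw [hA'0]; ext l m; simp [Matrix.mul_apply]
        · rw [Matrix.zero_mulVec]
      · exact ⟨hEv, hrest⟩
    obtain ⟨hEv, X', hX'r, hX'A, hX'1⟩ := hC2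
    obtain ⟨X, hXr, hXA, hX1⟩ := altConstruct A A' a b i j hAeq hai haj hbi hbj hcoord
      X' hX'r hX'A hX'1 hEv rfl
    have hk' : k = A'.rank + 2 := by omega
    subst hk'
    exact Or.inr ⟨hEv.add even_two, X, hXr, hXA, hX1⟩

/-- Any symmetric `n × n` matrix over `F₂` of rank `k` factors as `X * Xᵀ` where
`X` has rank `k` and either `k` columns, or `k + 1` columns with `k` even. -/
theorem symm_matrix_factorization {n k : ℕ}
    (A : Matrix (Fin n) (Fin n) (ZMod 2)) (hA : A.IsSymm) (hk : A.rank = k) :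
    (∃ X : Matrix (Fin n) (Fin k) (ZMod 2), X.rank = k ∧ A = X * X.transpose) ∨
    (∃ X : Matrix (Fin n) (Fin (k + 1)) (ZMod 2),
      X.rank = k ∧ A = X * X.transpose ∧ Even k) := by
  rcases master n k A hA hk with ⟨X, h1, h2⟩ | ⟨hEv, X, h1, h2, _⟩
  · exact Or.inl ⟨X, h1, h2⟩
  · exact Or.inr ⟨X, h1, h2, hEv⟩
end

section
/- Let A be an n×n symmetric matrix over F_2 of rank k with all diagonal entries equal to 0. Then k is even and there exists an n×(k+1) matrix X over F_2 of rank k with A = X·Xᵀ, such that every row of X has an even number of ones (equivalently, each row y of X satisfies y·y = 0). -/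
open Matrix Submodule Module

section helpers
variable {F : Type*} [Field F]

lemma vecMulVec_mulVec' {m n : Type*} [Fintype n] (a : m → F) (b : n → F) (x : n → F) :
    vecMulVec a b *ᵥ x = (b ⬝ᵥ x) • a := by
  ext r
  simp [vecMulVec_apply, mulVec, dotProduct, Finset.mul_sum, mul_comm, mul_left_comm]

lemma mul_vecMulVec' {l m n : Type*} [Fintype m] (M : Matrix l m F) (u : m → F) (w : n → F) :
    M * vecMulVec u w = vecMulVec (M *ᵥ u) w := by
  ext r s
  simp [mul_apply, vecMulVec_apply, mulVec, dotProduct, Finset.sum_mul, mul_assoc]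

lemma vecMulVec_mul' {l m n : Type*} [Fintype m] (u : l → F) (w : m → F) (M : Matrix m n F) :
    vecMulVec u w * M = vecMulVec u (w ᵥ* M) := by
  ext r s
  simp [mul_apply, vecMulVec_apply, vecMul, dotProduct, Finset.mul_sum, mul_assoc]

lemma transpose_vecMulVec' {m n : Type*} (u : m → F) (w : n → F) :
    (vecMulVec u w)ᵀ = vecMulVec w u := by
  ext r s; simp [vecMulVec_apply, mul_comm]

lemma vecMul_vecMulVec' {m n : Type*} [Fintype m] (x : m → F) (u : m → F) (w : n → F) :
    x ᵥ* vecMulVec u w = (x ⬝ᵥ u) • w := by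
  ext s
  simp [vecMulVec_apply, vecMul, dotProduct, Finset.sum_mul, mul_assoc]

lemma vecMulVec_zero' {m n : Type*} (u : m → F) : vecMulVec u (0 : n → F) = 0 := by
  ext; simp [vecMulVec_apply]

lemma zero_vecMulVec' {m n : Type*} (w : n → F) : vecMulVec (0 : m → F) w = 0 := by
  ext; simp [vecMulVec_apply]

end helpers

set_option synthInstance.maxHeartbeats 1000000 in
set_option maxHeartbeats 1000000 in
lemma key_lemma (n : ℕ) : ∀ (r : ℕ) (A : Matrix (Fin n) (Fin n) (ZMod 2)),
    A.rank = r → A.IsSymm → (∀ i, A i i = 0) →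
    ∃ m, r = 2 * m ∧ ∃ X : Matrix (Fin n) (Fin (2 * m + 1)) (ZMod 2),
      X.rank = 2 * m ∧ A = X * Xᵀ ∧
      ∃ v : Fin (2 * m + 1) → ZMod 2, X *ᵥ v = 0 ∧ v ⬝ᵥ v = 1 ∧
        ∀ w, X *ᵥ w = 0 → ∃ c : ZMod 2, w = c • v := by
  intro r
  induction r using Nat.strong_induction_on with
  | _ r IH =>
  intro A hrank hsymm hdiag
  by_cases hA0 : A = 0
  · subst hA0
    rw [Matrix.rank_zero] at hrank
    refine ⟨0, by omega, 0, by rw [Matrix.rank_zero], by simp, fun _ => 1, by simp, by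
      simp [dotProduct], fun w _ => ⟨w 0, funext fun t => by fin_cases t; simp⟩⟩
  · -- locate an off-diagonal 1
    have hZ : ∀ x : ZMod 2, x ≠ 0 → x = 1 := by decide
    obtain ⟨i, j, hij0⟩ : ∃ i j, A i j ≠ 0 := by
      by_contra h; push_neg at h; exact hA0 (by ext i j; simp [h i j])
    have hij1 : A i j = 1 := hZ _ hij0
    have hsym : ∀ r s, A r s = A s r := fun r s => hsymm.apply s r
    have hji1 : A j i = 1 := by rw [hsym j i]; exact hij1
    set a : Fin n → ZMod 2 := fun r => A r i with ha
    set b : Fin n → ZMod 2 := fun r => A r j with hb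
    have hai : a i = 0 := hdiag i
    have haj : a j = 1 := hji1
    have hbi : b i = 1 := hij1
    have hbj : b j = 0 := hdiag j
    set A'' : Matrix (Fin n) (Fin n) (ZMod 2) := A + vecMulVec a b + vecMulVec b a with hA''
    have hA''symm : A''.IsSymm := Matrix.IsSymm.ext fun r s => by
      simp only [hA'', Matrix.add_apply, vecMulVec_apply]
      rw [hsym s r]; ring
    have hxx : ∀ x : ZMod 2, x + x = 0 := by decide
    have hA''diag : ∀ r, A'' r r = 0 := fun r => by
      simp only [hA'', Matrix.add_apply, vecMulVec_apply, hdiag r, zero_add,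
        mul_comm (b r) (a r)]
      exact hxx _
    have hA''row_i : ∀ s, A'' i s = 0 := fun s => by
      simp only [hA'', Matrix.add_apply, vecMulVec_apply, hai, hbi, zero_mul, one_mul,
        zero_add, add_zero, ha, hb]
      rw [hsym s i]
      simp only [hdiag, hij1, hji1, zero_mul, one_mul, mul_zero, zero_add, add_zero]
      exact hxx _
    have hA''row_j : ∀ s, A'' j s = 0 := fun s => by
      simp only [hA'', Matrix.add_apply, vecMulVec_apply, haj, hbj, zero_mul, one_mul,
        mul_zero, zero_add, add_zero, ha, hb]
      rw [hsym s j]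
      simp only [hdiag, hij1, hji1, zero_mul, one_mul, mul_zero, zero_add, add_zero]
      exact hxx _
    classical
    set W := LinearMap.range A.mulVecLin with hW
    set V := LinearMap.range A''.mulVecLin with hV
    have haW : a ∈ W := ⟨Pi.single i 1, by
      simp only [mulVecLin_apply, mulVec_single_one]; rfl⟩
    have hbW : b ∈ W := ⟨Pi.single j 1, by
      simp only [mulVecLin_apply, mulVec_single_one]; rfl⟩
    have hupd : ∀ x, A'' *ᵥ x = A *ᵥ x + (b ⬝ᵥ x) • a + (a ⬝ᵥ x) • b := by
      intro x
      rw [hA'', add_mulVec, add_mulVec, vecMulVec_mulVec', vecMulVec_mulVec']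
    have hupd' : ∀ x, A *ᵥ x = A'' *ᵥ x + (b ⬝ᵥ x) • a + (a ⬝ᵥ x) • b := by
      intro x
      rw [hupd x]
      ext r
      simp only [Pi.add_apply, Pi.smul_apply, smul_eq_mul]
      generalize (A *ᵥ x) r = p
      generalize (b ⬝ᵥ x) * a r = q
      generalize (a ⬝ᵥ x) * b r = s
      revert p q s; decide
    have hVW : V ≤ W := by
      rintro z ⟨x, rfl⟩
      rw [mulVecLin_apply, hupd x]
      exact add_mem (add_mem ⟨x, rfl⟩ (smul_mem _ _ haW)) (smul_mem _ _ hbW)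
    have hVij : ∀ z ∈ V, z i = 0 ∧ z j = 0 := by
      rintro z ⟨x, rfl⟩
      constructor
      · simp [mulVecLin_apply, mulVec, dotProduct, hA''row_i]
      · simp [mulVecLin_apply, mulVec, dotProduct, hA''row_j]
    let φ : (Fin n → ZMod 2) →ₗ[ZMod 2] (ZMod 2) × (ZMod 2) :=
      (LinearMap.proj i).prod (LinearMap.proj j)
    let f : W →ₗ[ZMod 2] (ZMod 2) × (ZMod 2) := φ.comp W.subtype
    have hfsurj : LinearMap.range f = ⊤ := by
      rw [LinearMap.range_eq_top]
      rintro ⟨p, q⟩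
      refine ⟨⟨q • a + p • b, add_mem (smul_mem _ _ haW) (smul_mem _ _ hbW)⟩, ?_⟩
      simp only [f, φ, LinearMap.comp_apply, Submodule.subtype_apply, LinearMap.prod_apply,
        LinearMap.proj_apply, Function.prod, Pi.add_apply, Pi.smul_apply, smul_eq_mul, hai, haj,
        hbi, hbj, Prod.mk.injEq]
      constructor <;> ring
    have hfker : LinearMap.ker f = V.comap W.subtype := by
      ext ⟨w, hw⟩
      simp only [LinearMap.mem_ker, Submodule.mem_comap, Submodule.subtype_apply]
      constructor
      · intro hker
        have hwi : w i = 0 := congrArg Prod.fst hker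
        have hwj : w j = 0 := congrArg Prod.snd hker
        obtain ⟨x, hx⟩ := hw
        rw [mulVecLin_apply] at hx
        have hxw := (hupd' x).symm.trans hx
        have hwieq := congrFun hxw i
        have hwjeq := congrFun hxw j
        simp only [Pi.add_apply, Pi.smul_apply, smul_eq_mul, hai, haj, hbi, hbj,
          mul_zero, mul_one, add_zero] at hwieq hwjeq
        have hzi := (hVij _ ⟨x, rfl⟩).1
        have hzj := (hVij _ ⟨x, rfl⟩).2
        rw [mulVecLin_apply] at hzi hzj
        rw [hzi, hwi, zero_add] at hwieq
        rw [hzj, hwj, zero_add] at hwjeq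
        have : w = A'' *ᵥ x := by
          rw [← hxw, hwieq, hwjeq, zero_smul, zero_smul, add_zero, add_zero]
        exact ⟨x, by rw [mulVecLin_apply, ← this]⟩
      · intro hv
        obtain ⟨h1, h2⟩ := hVij _ hv
        have : φ w = (w i, w j) := rfl
        simp only [f, LinearMap.comp_apply, Submodule.subtype_apply, this, h1, h2]
        rfl
    have hrkW : finrank (ZMod 2) W = finrank (ZMod 2) V + 2 := by
      have h := LinearMap.finrank_range_add_finrank_ker f
      rw [hfsurj, hfker] at h
      rw [finrank_top] at h
      have h2 : finrank (ZMod 2) ((ZMod 2) × (ZMod 2)) = 2 := by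
        rw [Module.finrank_prod, finrank_self]
      have h3 : finrank (ZMod 2) (V.comap W.subtype) = finrank (ZMod 2) V :=
        (Submodule.comapSubtypeEquivOfLe hVW).finrank_eq
      omega
    have hrA : finrank (ZMod 2) W = r := hrank
    have hrA'' : A''.rank = r - 2 := by
      have : A''.rank = finrank (ZMod 2) V := rfl
      omega
    have hr2 : 2 ≤ r := by omega
    obtain ⟨m'', hm'', X'', hX''rank, hX''fact, v₀, hv₀ker, hv₀dot, hv₀span⟩ :=
      IH (r - 2) (by omega) A'' hrA'' hA''symm hA''diag
    have hVX'' : LinearMap.range X''.mulVecLin = V := by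
      have hle : V ≤ LinearMap.range X''.mulVecLin := by
        rintro z ⟨x, rfl⟩
        refine ⟨X''ᵀ *ᵥ x, ?_⟩
        rw [mulVecLin_apply, mulVecLin_apply, mulVec_mulVec, ← hX''fact]
      have e1 : X''.rank = finrank (ZMod 2) (LinearMap.range X''.mulVecLin) := rfl
      have e2 : A''.rank = finrank (ZMod 2) V := rfl
      exact (Submodule.eq_of_le_of_finrank_le hle (by omega)).symm
    have hX''V : ∀ u, X'' *ᵥ u ∈ V := fun u => hVX'' ▸ ⟨u, rfl⟩
    set P : Matrix (Fin n) (Fin 2) (ZMod 2) :=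
      Matrix.of (fun r t => if t = 0 then a r + b r else a r) with hPdef
    set X₂ : Matrix (Fin n) (Fin (2 * m'' + 1)) (ZMod 2) := X'' + vecMulVec b v₀ with hX₂def
    set Y : Matrix (Fin n) (Fin 2 ⊕ Fin (2 * m'' + 1)) (ZMod 2) := fromCols P X₂ with hYdef
    have h23 : 2 * (m'' + 1) + 1 = 2 + (2 * m'' + 1) := by omega
    set e : Fin (2 * (m'' + 1) + 1) ≃ (Fin 2 ⊕ Fin (2 * m'' + 1)) :=
      (finCongr h23).trans finSumFinEquiv.symm with hedef
    set X : Matrix (Fin n) (Fin (2 * (m'' + 1) + 1)) (ZMod 2) := Y.submatrix id e with hXdef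
    have hPmul : ∀ c : Fin 2 → ZMod 2, P *ᵥ c = c 0 • (a + b) + c 1 • a := by
      intro c; ext r
      simp [hPdef, mulVec, dotProduct, Fin.sum_univ_two]
      ring
    have hX₂mul : ∀ u, X₂ *ᵥ u = X'' *ᵥ u + (v₀ ⬝ᵥ u) • b := by
      intro u; rw [hX₂def, add_mulVec, vecMulVec_mulVec']
    have hXmul : ∀ w, X *ᵥ w = Y *ᵥ (w ∘ e.symm) := by
      intro w; rw [hXdef, submatrix_mulVec_equiv]; rfl
    have hsplit : ∀ u : (Fin 2 ⊕ Fin (2 * m'' + 1)) → ZMod 2,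
        u = Sum.elim (u ∘ Sum.inl) (u ∘ Sum.inr) := by
      intro u; ext s; cases s <;> rfl
    have hYmul : ∀ (c : Fin 2 → ZMod 2) (u), Y *ᵥ (Sum.elim c u) = P *ᵥ c + X₂ *ᵥ u := by
      intro c u; rw [hYdef, fromCols_mulVec_sumElim]
    -- range of X equals W
    have hmemR : ∀ u : (Fin 2 ⊕ Fin (2 * m'' + 1)) → ZMod 2,
        Y *ᵥ u ∈ LinearMap.range X.mulVecLin := by
      intro u
      refine ⟨u ∘ e, ?_⟩
      have hcomp : (u ∘ e) ∘ e.symm = u := funext fun s => congrArg u (e.apply_symm_apply s)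
      rw [mulVecLin_apply, hXmul, hcomp]
    have haR : a ∈ LinearMap.range X.mulVecLin := by
      have h := hmemR (Sum.elim ![0, 1] 0)
      rwa [hYmul, hPmul, mulVec_zero, add_zero, Matrix.cons_val_zero, Matrix.cons_val_one,
        Matrix.cons_val_zero, zero_smul, one_smul, zero_add] at h
    have hbR : b ∈ LinearMap.range X.mulVecLin := by
      have h := hmemR (Sum.elim ![1, 1] 0)
      rw [hYmul, hPmul, mulVec_zero, add_zero, Matrix.cons_val_zero, Matrix.cons_val_one,
        Matrix.cons_val_zero, one_smul, one_smul] at h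
      have : a + b + a = b := by
        ext t; simp only [Pi.add_apply]; generalize a t = x; generalize b t = y
        revert x y; decide
      rwa [this] at h
    have hX''R : ∀ u, X'' *ᵥ u ∈ LinearMap.range X.mulVecLin := by
      intro u
      have h := hmemR (Sum.elim 0 u)
      rw [hYmul, hPmul, hX₂mul] at h
      simp only [Pi.zero_apply, zero_smul, zero_add] at h
      have heq : X'' *ᵥ u = (X'' *ᵥ u + (v₀ ⬝ᵥ u) • b) + (v₀ ⬝ᵥ u) • b := by
        ext t
        simp only [Pi.add_apply, Pi.smul_apply, smul_eq_mul]
        generalize (X'' *ᵥ u) t = x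
        generalize (v₀ ⬝ᵥ u) * b t = y
        revert x y; decide
      rw [heq]
      exact add_mem h (smul_mem _ _ hbR)
    have hrangeX : LinearMap.range X.mulVecLin = W := by
      apply le_antisymm
      · rintro z ⟨w, rfl⟩
        rw [mulVecLin_apply, hXmul, hsplit (w ∘ e.symm), hYmul, hPmul, hX₂mul]
        exact add_mem (add_mem (smul_mem _ _ (add_mem haW hbW)) (smul_mem _ _ haW))
          (add_mem (hVW (hX''V _)) (smul_mem _ _ hbW))
      · rintro z ⟨x, rfl⟩
        rw [mulVecLin_apply, hupd' x]
        have hA''R : A'' *ᵥ x ∈ LinearMap.range X.mulVecLin := by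
          rw [hX''fact, ← mulVec_mulVec]
          exact hX''R _
        exact add_mem (add_mem hA''R (smul_mem _ _ haR)) (smul_mem _ _ hbR)
    have hXrank : X.rank = 2 * (m'' + 1) := by
      have e1 : X.rank = finrank (ZMod 2) W := by rw [Matrix.rank, hrangeX]
      omega
    -- factorization
    have h1 : P * Pᵀ = vecMulVec (a + b) (a + b) + vecMulVec a a := by
      ext r s
      simp only [mul_apply, Fin.sum_univ_two, hPdef, Matrix.of_apply, transpose_apply,
        Matrix.add_apply, vecMulVec_apply, Pi.add_apply]
      norm_num
    have h2 : X₂ * X₂ᵀ = X'' * X''ᵀ + vecMulVec b b := by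
      simp only [hX₂def, transpose_add, transpose_vecMulVec', Matrix.add_mul, Matrix.mul_add,
        mul_vecMulVec', vecMulVec_mul', hv₀ker, vecMul_transpose, vecMul_vecMulVec', hv₀dot,
        one_smul, zero_vecMulVec', vecMulVec_zero', add_zero, zero_add, add_mulVec,
        vecMulVec_mulVec']
    have hYY : Y * Yᵀ = A := by
      rw [hYdef, transpose_fromCols, fromCols_mul_fromRows, h1, h2, ← hX''fact, hA'']
      ext r s
      simp only [Matrix.add_apply, vecMulVec_apply, Pi.add_apply]
      generalize A r s = q
      generalize a r = x₁
      generalize b r = y₁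
      generalize a s = x₂
      generalize b s = y₂
      revert q x₁ y₁ x₂ y₂; decide
    have hXX : X * Xᵀ = A := by
      rw [hXdef, transpose_submatrix, submatrix_mul_equiv, submatrix_id_id, hYY]
    -- the kernel vector
    set v : Fin (2 * (m'' + 1) + 1) → ZMod 2 := (Sum.elim ![1, 1] v₀) ∘ e with hvdef
    have hvcomp : v ∘ e.symm = Sum.elim ![1, 1] v₀ :=
      funext fun s => congrArg _ (e.apply_symm_apply s)
    have hv1 : X *ᵥ v = 0 := by
      rw [hXmul, hvcomp, hYmul, hPmul, hX₂mul, hv₀ker, hv₀dot]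
      simp only [Matrix.cons_val_zero, Matrix.cons_val_one, Matrix.head_cons, one_smul, zero_add]
      ext t
      simp only [Pi.add_apply, Pi.zero_apply]
      generalize a t = x; generalize b t = y
      revert x y; decide
    have hv2 : v ⬝ᵥ v = 1 := by
      have hs : v ⬝ᵥ v = ∑ s, (Sum.elim ![1, 1] v₀ s) * (Sum.elim ![1, 1] v₀ s) :=
        Fintype.sum_equiv e _ _ (fun t => rfl)
      rw [hs, Fintype.sum_sum_type]
      simp only [Sum.elim_inl, Sum.elim_inr, Fin.sum_univ_two, Matrix.cons_val_zero,
        Matrix.cons_val_one, Matrix.head_cons, mul_one]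
      rw [show ∑ q, v₀ q * v₀ q = v₀ ⬝ᵥ v₀ from rfl, hv₀dot]
      decide
    refine ⟨m'' + 1, by omega, X, hXrank, hXX.symm, v, hv1, hv2, ?_⟩
    intro w hw
    have hu : Y *ᵥ (w ∘ e.symm) = 0 := by rw [← hXmul]; exact hw
    rw [hsplit (w ∘ e.symm), hYmul, hPmul, hX₂mul] at hu
    set u₁ : Fin 2 → ZMod 2 := (w ∘ e.symm) ∘ Sum.inl with hu₁def
    set u₂ : Fin (2 * m'' + 1) → ZMod 2 := (w ∘ e.symm) ∘ Sum.inr with hu₂def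
    have hXu₂ := hVij _ (hX''V u₂)
    have hui := congrFun hu i
    have huj := congrFun hu j
    simp only [Pi.add_apply, Pi.smul_apply, smul_eq_mul, Pi.zero_apply, hai, haj, hbi, hbj,
      hXu₂.1, hXu₂.2, mul_zero, mul_one, add_zero, zero_add] at hui huj
    -- hui : u₁ 0 * (0 + 1) + u₁ 1 * 0 + (v₀ ⬝ᵥ u₂) = 0  (or simplified)
    have hcancel : ∀ x y : ZMod 2, x + y = 0 → x = y := by decide
    have hc : v₀ ⬝ᵥ u₂ = u₁ 0 := by
      have := hui
      revert this
      generalize u₁ 0 = x; generalize v₀ ⬝ᵥ u₂ = y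
      revert x y; decide
    have hc1 : u₁ 1 = u₁ 0 := by
      have := huj
      revert this
      generalize u₁ 0 = x; generalize u₁ 1 = y
      revert x y; decide
    have hXu₂0 : X'' *ᵥ u₂ = 0 := by
      ext t
      have h := congrFun hu t
      rw [hc, hc1] at h
      revert h
      simp only [Pi.add_apply, Pi.smul_apply, smul_eq_mul, Pi.zero_apply]
      generalize u₁ 0 = x; generalize a t = y; generalize b t = z
      generalize (X'' *ᵥ u₂) t = q
      revert x y z q; decide
    obtain ⟨c', hc'⟩ := hv₀span u₂ hXu₂0
    have hcc : u₁ 0 = c' := by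
      rw [← hc, hc', dotProduct_smul, hv₀dot, smul_eq_mul, mul_one]
    refine ⟨c', ?_⟩
    have hwe : w ∘ e.symm = c' • (Sum.elim ![1, 1] v₀) := by
      ext s
      cases s with
      | inl p =>
        fin_cases p
        · show u₁ 0 = c' • (1 : ZMod 2)
          rw [hcc, smul_eq_mul, mul_one]
        · show u₁ 1 = c' • (1 : ZMod 2)
          rw [hc1, hcc, smul_eq_mul, mul_one]
      | inr q =>
        show u₂ q = _
        rw [hc']
        rfl
    funext t
    have h := congrFun hwe (e t)
    simp only [Function.comp_apply, Equiv.symm_apply_apply] at h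
    exact h

/-- A symmetric `n × n` matrix over `F₂` of rank `k` with zero diagonal has `k`
even, and factors as `X * Xᵀ` where `X` is `n × (k+1)` of rank `k` and every row
`y` of `X` satisfies `y · y = 0`. -/
theorem symm_matrix_zero_diag_factorization {n k : ℕ}
    (A : Matrix (Fin n) (Fin n) (ZMod 2)) (hA : A.IsSymm) (hk : A.rank = k)
    (hdiag : ∀ i, A i i = 0) :
    Even k ∧ ∃ X : Matrix (Fin n) (Fin (k + 1)) (ZMod 2),
      X.rank = k ∧ A = X * X.transpose ∧
      ∀ i, dotProduct (X i) (X i) = 0 := by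
  obtain ⟨m, hkm, X, hXrank, hfact, v, -, -, -⟩ := key_lemma n k A hk hA hdiag
  subst hkm
  refine ⟨⟨m, two_mul m⟩, X, hXrank, hfact, ?_⟩
  intro i
  have h : (X * Xᵀ) i i = 0 := by rw [← hfact]; exact hdiag i
  rw [← h, Matrix.mul_apply]
  rfl
end

section
/- For every oriented graph D there exists a tournament D* on the same vertex set containing D as a subgraph with inv(D*) = inv(D). -/
/-- A (simple) oriented graph: no loops, at most one arc between two vertices. -/
structure OGraph (V : Type) where
  adj : V → V → Prop
  loopless : ∀ v, ¬ adj v v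
  asymm : ∀ u v, adj u v → ¬ adj v u

namespace OGraph

variable {V V₁ V₂ V₃ : Type}

/-- Inversion of a set `X`: reverse every arc with both ends in `X`. -/
def invert (D : OGraph V) (X : Set V) : OGraph V where
  adj u v := (u ∈ X ∧ v ∈ X ∧ D.adj v u) ∨ ((u ∉ X ∨ v ∉ X) ∧ D.adj u v)
  loopless := by
    intro v h
    rcases h with ⟨_, _, h⟩ | ⟨_, h⟩ <;> exact D.loopless v h
  asymm := by
    rintro u v (⟨hu, hv, h⟩ | ⟨h1, h⟩) (⟨hv', hu', h'⟩ | ⟨h2, h'⟩)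
    · exact D.asymm u v h' h
    · rcases h2 with h2 | h2
      · exact h2 hv
      · exact h2 hu
    · rcases h1 with h1 | h1
      · exact h1 hu'
      · exact h1 hv'
    · exact D.asymm u v h h'

/-- Successively invert each set of a list. -/
def invertList (D : OGraph V) (L : List (Set V)) : OGraph V :=
  L.foldl invert D

/-- An oriented graph is acyclic if it has no directed cycle. -/
def Acyclic (D : OGraph V) : Prop :=
  ∀ v, ¬ Relation.TransGen D.adj v v

/-- The inversion number: the least length of a decycling family. -/
noncomputable def inv (D : OGraph V) : ℕ :=
  sInf {m | ∃ L : List (Set V), L.length = m ∧ (D.invertList L).Acyclic}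

/-- A tournament has exactly one arc between any two distinct vertices. -/
def IsTournament (D : OGraph V) : Prop :=
  ∀ u v, u ≠ v → D.adj u v ∨ D.adj v u

/-- Reversing every arc. -/
def reverse (D : OGraph V) : OGraph V where
  adj u v := D.adj v u
  loopless v h := D.loopless v h
  asymm u v h h2 := D.asymm u v h2 h

/-- The dijoin `D₁ → D₂`: disjoint union plus all arcs from `D₁` to `D₂`. -/
def dijoin (D₁ : OGraph V₁) (D₂ : OGraph V₂) : OGraph (V₁ ⊕ V₂) where
  adj x y :=
    match x, y with
    | .inl u, .inl v => D₁.adj u v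
    | .inr u, .inr v => D₂.adj u v
    | .inl _, .inr _ => True
    | .inr _, .inl _ => False
  loopless := by
    rintro (v | v) h
    · exact D₁.loopless v h
    · exact D₂.loopless v h
  asymm := by
    rintro (u | u) (v | v) h h'
    · exact D₁.asymm u v h h'
    · exact h'
    · exact h
    · exact D₂.asymm u v h h'

/-- `M` is a decycling matrix for `D`: a symmetric `F₂`-matrix such that reversing
all arcs `uv` with `M u v = 1` yields an acyclic oriented graph. -/
def IsDecyclingMatrix (D : OGraph V) (M : Matrix V V (ZMod 2)) : Prop :=
  M.IsSymm ∧
    ∀ v, ¬ Relation.TransGen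
      (fun u w => (M u w = 1 ∧ D.adj w u) ∨ (M u w ≠ 1 ∧ D.adj u w)) v v

/-- The tournament minimum rank: the least rank of a decycling matrix. -/
noncomputable def tmr [Fintype V] (D : OGraph V) : ℕ :=
  sInf {r | ∃ M : Matrix V V (ZMod 2), D.IsDecyclingMatrix M ∧ M.rank = r}

end OGraph

namespace OGraph

variable {V : Type}

lemma ext' {D E : OGraph V} (h : D.adj = E.adj) : D = E := by
  cases D; cases E; cases h; rfl

lemma invert_invert (D : OGraph V) (X : Set V) : (D.invert X).invert X = D := by
  apply ext'
  funext u v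
  apply propext
  show ((u ∈ X ∧ v ∈ X ∧ ((v ∈ X ∧ u ∈ X ∧ D.adj u v) ∨ ((v ∉ X ∨ u ∉ X) ∧ D.adj v u)))
    ∨ ((u ∉ X ∨ v ∉ X) ∧ ((u ∈ X ∧ v ∈ X ∧ D.adj v u) ∨ ((u ∉ X ∨ v ∉ X) ∧ D.adj u v)))) ↔ D.adj u v
  by_cases hu : u ∈ X <;> by_cases hv : v ∈ X <;> tauto

lemma invertList_nil (D : OGraph V) : D.invertList [] = D := rfl

lemma invertList_cons (D : OGraph V) (X : Set V) (L : List (Set V)) :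
    D.invertList (X :: L) = (D.invert X).invertList L := rfl

lemma invertList_append (D : OGraph V) (L M : List (Set V)) :
    D.invertList (L ++ M) = (D.invertList L).invertList M :=
  List.foldl_append ..

lemma invertList_reverse (D : OGraph V) (L : List (Set V)) :
    (D.invertList L).invertList L.reverse = D := by
  induction L generalizing D with
  | nil => rfl
  | cons X L ih =>
    rw [invertList_cons, List.reverse_cons, invertList_append, ih,
      show (D.invert X).invertList [X] = (D.invert X).invert X from rfl, invert_invert]

lemma invert_mono {D E : OGraph V} (h : ∀ u v, D.adj u v → E.adj u v) (X : Set V) :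
    ∀ u v, (D.invert X).adj u v → (E.invert X).adj u v := by
  intro u v hv
  rcases hv with ⟨h1, h2, h3⟩ | ⟨h1, h2⟩
  · exact Or.inl ⟨h1, h2, h v u h3⟩
  · exact Or.inr ⟨h1, h u v h2⟩

lemma invertList_mono {D E : OGraph V} (h : ∀ u v, D.adj u v → E.adj u v)
    (L : List (Set V)) : ∀ u v, (D.invertList L).adj u v → (E.invertList L).adj u v := by
  induction L generalizing D E with
  | nil => exact h
  | cons X L ih => exact ih (invert_mono h X)

lemma acyclic_mono {D E : OGraph V} (h : ∀ u v, D.adj u v → E.adj u v)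
    (hE : E.Acyclic) : D.Acyclic := by
  intro v hv
  exact hE v (Relation.TransGen.mono (fun a b => h a b) _ _ hv)

lemma invert_tournament {D : OGraph V} (h : D.IsTournament) (X : Set V) :
    (D.invert X).IsTournament := by
  intro u v huv
  by_cases hb : u ∈ X ∧ v ∈ X
  · rcases h u v huv with h' | h'
    · exact Or.inr (Or.inl ⟨hb.2, hb.1, h'⟩)
    · exact Or.inl (Or.inl ⟨hb.1, hb.2, h'⟩)
  · have hn : u ∉ X ∨ v ∉ X := by tauto
    rcases h u v huv with h' | h'
    · exact Or.inl (Or.inr ⟨hn, h'⟩)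
    · exact Or.inr (Or.inr ⟨hn.symm, h'⟩)

lemma invertList_tournament {D : OGraph V} (h : D.IsTournament) (L : List (Set V)) :
    (D.invertList L).IsTournament := by
  induction L generalizing D with
  | nil => exact h
  | cons X L ih => exact ih (invert_tournament h X)

/-- An acyclic oriented graph extends to an acyclic tournament. -/
lemma exists_acyclic_tournament_ext (D : OGraph V) (hD : D.Acyclic) :
    ∃ E : OGraph V, E.IsTournament ∧ (∀ u v, D.adj u v → E.adj u v) ∧ E.Acyclic := by
  set r : V → V → Prop := fun u v => u = v ∨ Relation.TransGen D.adj u v with hr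
  haveI : IsPartialOrder V r := by
    refine { refl := fun a => Or.inl rfl, trans := ?_, antisymm := ?_ }
    · rintro a b c (rfl | hab) (rfl | hbc)
      · exact Or.inl rfl
      · exact Or.inr hbc
      · exact Or.inr hab
      · exact Or.inr (hab.trans hbc)
    · rintro a b (rfl | hab) (h | hba)
      · rfl
      · rfl
      · exact h.symm
      · exact absurd (hab.trans hba) (hD a)
  obtain ⟨s, hs, hrs⟩ := extend_partialOrder r
  refine ⟨⟨fun u v => s u v ∧ u ≠ v, ?_, ?_⟩, ?_, ?_, ?_⟩
  · exact fun v h => h.2 rfl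
  · exact fun u v h h' => h.2 (hs.toIsPartialOrder.toAntisymm.antisymm _ _ h.1 h'.1)
  · intro u v huv
    rcases hs.toTotal.total u v with h | h
    · exact Or.inl ⟨h, huv⟩
    · exact Or.inr ⟨h, huv.symm⟩
  · intro u v huv
    refine ⟨hrs u v (Or.inr (Relation.TransGen.single huv)), ?_⟩
    rintro rfl; exact D.loopless u huv
  · have htr : Transitive (fun u v => s u v ∧ u ≠ v) := by
      rintro a b c ⟨hab, hab'⟩ ⟨hbc, hbc'⟩
      refine ⟨hs.toIsPartialOrder.toIsPreorder.toIsTrans.trans _ _ _ hab hbc, ?_⟩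
      rintro rfl
      exact hab' (hs.toIsPartialOrder.toAntisymm.antisymm _ _ hab hbc)
    intro v hv
    haveI : IsTrans V (fun u v => s u v ∧ u ≠ v) := ⟨fun a b c => @htr a b c⟩
    rw [Relation.transGen_eq_self] at hv
    exact hv.2 rfl

/-- Every finite oriented graph admits a decycling list. -/
lemma exists_decycling [Fintype V] (D : OGraph V) :
    ∃ L : List (Set V), (D.invertList L).Acyclic := by
  obtain ⟨n, ⟨e⟩⟩ : ∃ n, Nonempty (V ≃ Fin n) := ⟨_, ⟨Fintype.equivFin V⟩⟩
  set f : OGraph V → Set (V × V) := fun D => {p | D.adj p.1 p.2 ∧ e p.2 < e p.1} with hf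
  obtain ⟨k, hk⟩ : ∃ k, (f D).ncard = k := ⟨_, rfl⟩
  induction k using Nat.strong_induction_on generalizing D with
  | _ k ih =>
    rcases eq_or_ne (f D) ∅ with hemp | hne
    · refine ⟨[], ?_⟩
      have hlt : ∀ u v, D.adj u v → e u < e v := by
        intro u v huv
        rcases lt_trichotomy (e u) (e v) with h | h | h
        · exact h
        · exact absurd (e.injective h ▸ huv) (D.loopless v)
        · exact absurd (Set.mem_setOf.mpr ⟨huv, h⟩) (hemp ▸ Set.notMem_empty (u, v))
      intro v hv
      rw [invertList_nil] at hv
      have htr : Transitive (fun u v : V => e u < e v) := fun a b c => lt_trans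
      have h2 := Relation.TransGen.mono (fun a b h => hlt a b h) _ _ hv
      haveI : IsTrans V (fun u v : V => e u < e v) := ⟨fun a b c => @htr a b c⟩
      rw [Relation.transGen_eq_self] at h2
      exact lt_irrefl _ h2
    · obtain ⟨p, hp⟩ := Set.nonempty_iff_ne_empty.mpr hne
      obtain ⟨u, v⟩ := p
      simp only [hf, Set.mem_setOf_eq] at hp
      obtain ⟨huv, hlt⟩ := hp
      set D' := D.invert {u, v} with hD'
      have hsub : f D' ⊆ f D \ {(u, v)} := by
        rintro ⟨a, b⟩ hmem
        simp only [hf, Set.mem_setOf_eq] at hmem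
        obtain ⟨hab, hba⟩ := hmem
        rcases hab with ⟨ha, hb, hab⟩ | ⟨h1, hab⟩
        · rcases ha with rfl | rfl <;> rcases hb with rfl | rfl
          · exact absurd hab (D.loopless _)
          · exact absurd hab (D.asymm _ _ huv)
          · exact absurd hba (lt_asymm hlt)
          · exact absurd hab (D.loopless _)
        · refine ⟨⟨hab, hba⟩, ?_⟩
          intro h
          simp only [Set.mem_singleton_iff, Prod.mk.injEq] at h
          obtain ⟨rfl, rfl⟩ := h
          rcases h1 with h1 | h1
          · exact h1 (Or.inl rfl)
          · exact h1 (Or.inr rfl)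
      have hcard : (f D').ncard < k := by
        calc (f D').ncard ≤ (f D \ {(u, v)}).ncard :=
              Set.ncard_le_ncard hsub ((Set.toFinite _).diff)
          _ < (f D).ncard := by
              refine Set.ncard_lt_ncard ?_ (Set.toFinite _)
              exact Set.ssubset_iff_of_subset Set.diff_subset |>.mpr
                ⟨(u, v), ⟨huv, hlt⟩, fun h => h.2 rfl⟩
          _ = k := hk
      obtain ⟨L, hL⟩ := ih _ hcard D' rfl
      exact ⟨{u, v} :: L, by rwa [invertList_cons]⟩

end OGraph

open OGraph

/-- Every oriented graph extends to a tournament on the same vertex set with the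
same inversion number. -/
theorem exists_tournament_extension {V : Type} [Fintype V] (D : OGraph V) :
    ∃ T : OGraph V, T.IsTournament ∧ (∀ u v, D.adj u v → T.adj u v) ∧
      T.inv = D.inv := by
  have hDne : {m | ∃ L : List (Set V), L.length = m ∧ (D.invertList L).Acyclic}.Nonempty := by
    obtain ⟨L, hL⟩ := exists_decycling D
    exact ⟨L.length, L, rfl, hL⟩
  obtain ⟨L, hlen, hacyc⟩ := Nat.sInf_mem hDne
  obtain ⟨E, hTour, hsub, hEacyc⟩ := exists_acyclic_tournament_ext _ hacyc
  refine ⟨E.invertList L.reverse, invertList_tournament hTour _, ?_, ?_⟩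
  · have := invertList_mono hsub L.reverse
    rw [invertList_reverse] at this
    exact this
  · have hTL : (E.invertList L.reverse).invertList L = E := by
      have h := invertList_reverse E L.reverse
      rwa [List.reverse_reverse] at h
    apply le_antisymm
    · apply Nat.sInf_le
      exact ⟨L, hlen, by rw [hTL]; exact hEacyc⟩
    · have hTne : {m | ∃ L' : List (Set V),
          L'.length = m ∧ ((E.invertList L.reverse).invertList L').Acyclic}.Nonempty := by
        obtain ⟨L', hL'⟩ := exists_decycling (E.invertList L.reverse)
        exact ⟨L'.length, L', rfl, hL'⟩
      obtain ⟨L', hlen', hacyc'⟩ := Nat.sInf_mem hTne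
      apply Nat.sInf_le
      refine ⟨L', hlen', ?_⟩
      have hDT : ∀ u v, D.adj u v → (E.invertList L.reverse).adj u v := by
        have := invertList_mono hsub L.reverse
        rw [invertList_reverse] at this
        exact this
      exact acyclic_mono (invertList_mono hDT L') hacyc'
end

section
/- For tournaments D₁ and D₂, tmr(D₁ → D₂) ≤ tmr(D₁) + tmr(D₂). -/
open OGraph


open Relation Matrix

/-- Rank of a block-diagonal matrix is at most the sum of the ranks. -/
lemma rank_fromBlocks_le_aux {F : Type} [Field F] {m n : Type} [Fintype m] [Fintype n]
    (A : Matrix m m F) (D : Matrix n n F) :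
    (Matrix.fromBlocks A 0 0 D).rank ≤ A.rank + D.rank := by
  classical
  let l₁ : (m → F) →ₗ[F] (m ⊕ n → F) :=
    { toFun := fun g => Sum.elim g 0
      map_add' := by intro g g'; funext x; cases x <;> simp
      map_smul' := by intro c g; funext x; cases x <;> simp }
  let l₂ : (n → F) →ₗ[F] (m ⊕ n → F) :=
    { toFun := fun g => Sum.elim 0 g
      map_add' := by intro g g'; funext x; cases x <;> simp
      map_smul' := by intro c g; funext x; cases x <;> simp }
  have hle : LinearMap.range (Matrix.fromBlocks A 0 0 D).mulVecLin ≤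
      (LinearMap.range A.mulVecLin).map l₁ ⊔ (LinearMap.range D.mulVecLin).map l₂ := by
    rintro y ⟨x, rfl⟩
    have hx : (Matrix.fromBlocks A 0 0 D).mulVecLin x
        = l₁ (A.mulVecLin (x ∘ Sum.inl)) + l₂ (D.mulVecLin (x ∘ Sum.inr)) := by
      funext z
      cases z <;>
        simp [l₁, l₂, Matrix.mulVec, dotProduct, Fintype.sum_sum_type,
          Matrix.fromBlocks]
    rw [hx]
    exact Submodule.add_mem_sup ⟨_, ⟨_, rfl⟩, rfl⟩ ⟨_, ⟨_, rfl⟩, rfl⟩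
  calc (Matrix.fromBlocks A 0 0 D).rank
      ≤ Module.finrank F
        ((LinearMap.range A.mulVecLin).map l₁ ⊔ (LinearMap.range D.mulVecLin).map l₂ :
          Submodule F (m ⊕ n → F)) := Submodule.finrank_mono hle
    _ ≤ Module.finrank F ((LinearMap.range A.mulVecLin).map l₁)
        + Module.finrank F ((LinearMap.range D.mulVecLin).map l₂) :=
        Submodule.finrank_add_le_finrank_add_finrank _ _
    _ ≤ A.rank + D.rank :=
        add_le_add (Submodule.finrank_map_le _ _) (Submodule.finrank_map_le _ _)

/-- Every oriented graph admits a decycling matrix. -/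
lemma OGraph.exists_isDecyclingMatrix {V : Type} (D : OGraph V) :
    ∃ M : Matrix V V (ZMod 2), D.IsDecyclingMatrix M := by
  classical
  let r : V → V → Prop := WellOrderingRel
  let M : Matrix V V (ZMod 2) := Matrix.of fun u v =>
    if (D.adj u v ∧ r v u) ∨ (D.adj v u ∧ r u v) then 1 else 0
  refine ⟨M, ?_, ?_⟩
  · show Mᵀ = M
    ext u v
    simp only [Matrix.transpose_apply, M, Matrix.of_apply]
    exact if_congr or_comm rfl rfl
  · intro v hv
    have key : ∀ u w, ((M u w = 1 ∧ D.adj w u) ∨ (M u w ≠ 1 ∧ D.adj u w)) → r u w := by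
      intro u w h
      rcases h with ⟨hM, hadj⟩ | ⟨hM, hadj⟩
      · have hc : (D.adj u w ∧ r w u) ∨ (D.adj w u ∧ r u w) := by
          by_contra hc
          simp only [M, Matrix.of_apply, if_neg hc] at hM
          exact one_ne_zero hM.symm
        rcases hc with ⟨h1, _⟩ | ⟨_, h2⟩
        · exact absurd hadj (D.asymm u w h1)
        · exact h2
      · have hne : ¬ ((D.adj u w ∧ r w u) ∨ (D.adj w u ∧ r u w)) := by
          intro hc
          exact hM (by simp [M, if_pos hc])
        have hnwu : ¬ r w u := fun h => hne (Or.inl ⟨hadj, h⟩)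
        have huw : u ≠ w := fun h => D.loopless u (h ▸ hadj)
        rcases trichotomous_of r u w with h | h | h
        · exact h
        · exact absurd h huw
        · exact absurd h hnwu
    have htg : Relation.TransGen r v v := Relation.TransGen.mono key _ _ hv
    have htr : Transitive r := fun _ _ _ hab hbc => trans_of r hab hbc
    rw [@Relation.transGen_eq_self _ r ⟨fun _ _ _ h1 h2 => htr h1 h2⟩] at htg
    exact irrefl_of r v htg
/-- For tournaments, `tmr (D₁ → D₂) ≤ tmr D₁ + tmr D₂`. -/
theorem tmr_dijoin_le {V₁ V₂ : Type} [Fintype V₁] [Fintype V₂]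
    (D₁ : OGraph V₁) (D₂ : OGraph V₂)
    (hD₁ : D₁.IsTournament) (hD₂ : D₂.IsTournament) :
    (D₁.dijoin D₂).tmr ≤ D₁.tmr + D₂.tmr := by
  classical
  have h₁ : ∃ M : Matrix V₁ V₁ (ZMod 2), D₁.IsDecyclingMatrix M ∧ M.rank = D₁.tmr := by
    obtain ⟨M, hM⟩ := D₁.exists_isDecyclingMatrix
    have hne : {r : ℕ | ∃ M : Matrix V₁ V₁ (ZMod 2),
        D₁.IsDecyclingMatrix M ∧ M.rank = r}.Nonempty := ⟨M.rank, ⟨M, hM, rfl⟩⟩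
    exact Nat.sInf_mem hne
  have h₂ : ∃ M : Matrix V₂ V₂ (ZMod 2), D₂.IsDecyclingMatrix M ∧ M.rank = D₂.tmr := by
    obtain ⟨M, hM⟩ := D₂.exists_isDecyclingMatrix
    have hne : {r : ℕ | ∃ M : Matrix V₂ V₂ (ZMod 2),
        D₂.IsDecyclingMatrix M ∧ M.rank = r}.Nonempty := ⟨M.rank, ⟨M, hM, rfl⟩⟩
    exact Nat.sInf_mem hne
  obtain ⟨M₁, hM₁, hr₁⟩ := h₁
  obtain ⟨M₂, hM₂, hr₂⟩ := h₂
  set M : Matrix (V₁ ⊕ V₂) (V₁ ⊕ V₂) (ZMod 2) := Matrix.fromBlocks M₁ 0 0 M₂ with hMdef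
  set r' : (V₁ ⊕ V₂) → (V₁ ⊕ V₂) → Prop := fun u w =>
    (M u w = 1 ∧ (D₁.dijoin D₂).adj w u) ∨ (M u w ≠ 1 ∧ (D₁.dijoin D₂).adj u w) with hr'
  set r₁ : V₁ → V₁ → Prop := fun u w =>
    (M₁ u w = 1 ∧ D₁.adj w u) ∨ (M₁ u w ≠ 1 ∧ D₁.adj u w) with hr₁def
  set r₂ : V₂ → V₂ → Prop := fun u w =>
    (M₂ u w = 1 ∧ D₂.adj w u) ∨ (M₂ u w ≠ 1 ∧ D₂.adj u w) with hr₂def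
  have step₁₁ : ∀ a b, r' (.inl a) (.inl b) → r₁ a b := by
    intro a b h
    rcases h with ⟨h1, h2⟩ | ⟨h1, h2⟩
    · exact Or.inl ⟨by simpa [M] using h1, h2⟩
    · exact Or.inr ⟨by simpa [M] using h1, h2⟩
  have step₂₂ : ∀ a b, r' (.inr a) (.inr b) → r₂ a b := by
    intro a b h
    rcases h with ⟨h1, h2⟩ | ⟨h1, h2⟩
    · exact Or.inl ⟨by simpa [M] using h1, h2⟩
    · exact Or.inr ⟨by simpa [M] using h1, h2⟩
  have step₂₁ : ∀ a b, ¬ r' (.inr a) (.inl b) := by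
    intro a b h
    rcases h with ⟨h1, h2⟩ | ⟨h1, h2⟩
    · simp [M] at h1
    · exact h2
  have hdec : (D₁.dijoin D₂).IsDecyclingMatrix M := by
    constructor
    · show Mᵀ = M
      rw [hMdef, Matrix.fromBlocks_transpose, Matrix.transpose_zero, Matrix.transpose_zero,
        hM₁.1, hM₂.1]
    · intro v hv
      have hv' : Relation.TransGen r' v v := hv
      cases v with
      | inl u =>
        have main : ∀ x, Relation.TransGen r' x (Sum.inl u) →
            ∃ a, x = Sum.inl a ∧ Relation.TransGen r₁ a u := by
          intro x h
          induction h using Relation.TransGen.head_induction_on with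
          | single h =>
            rename_i x'
            cases x' with
            | inl a => exact ⟨a, rfl, Relation.TransGen.single (step₁₁ a u h)⟩
            | inr a => exact absurd h (step₂₁ a u)
          | head h' h ih =>
            rename_i x' c
            obtain ⟨c', rfl, hc⟩ := ih
            cases x' with
            | inl a => exact ⟨a, rfl, hc.head (step₁₁ a c' h')⟩
            | inr a => exact absurd h' (step₂₁ a c')
        obtain ⟨a, ha, hcyc⟩ := main _ hv'
        cases Sum.inl.inj ha
        exact hM₁.2 u hcyc
      | inr u =>
        have main : ∀ y, Relation.TransGen r' (Sum.inr u) y →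
            ∃ b, y = Sum.inr b ∧ Relation.TransGen r₂ u b := by
          intro y h
          induction h with
          | single h =>
            rename_i y'
            cases y' with
            | inl b => exact absurd h (step₂₁ u b)
            | inr b => exact ⟨b, rfl, Relation.TransGen.single (step₂₂ u b h)⟩
          | tail hab hbc ih =>
            rename_i b c
            obtain ⟨b', rfl, hb⟩ := ih
            cases c with
            | inl c' => exact absurd hbc (step₂₁ b' c')
            | inr c' => exact ⟨c', rfl, hb.tail (step₂₂ b' c' hbc)⟩
        obtain ⟨b, hb, hcyc⟩ := main _ hv'
        cases Sum.inr.inj hb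
        exact hM₂.2 u hcyc
  have hle : (D₁.dijoin D₂).tmr ≤ M.rank := Nat.sInf_le ⟨M, hdec, rfl⟩
  calc (D₁.dijoin D₂).tmr ≤ M.rank := hle
    _ ≤ M₁.rank + M₂.rank := rank_fromBlocks_le_aux M₁ M₂
    _ = D₁.tmr + D₂.tmr := by rw [hr₁, hr₂]
end

section
/- Let D be a tournament and X₁,...,Xₘ a decycling family for D. For each vertex v let 𝐯 ∈ F_2^m be its characteristic vector (with i-th coordinate 1 iff v ∈ Xᵢ). Then the Gram matrix G with G_{uv} = 𝐮·𝐯 (dot product over F_2) is a decycling matrix for D, and consequently tmr(D) ≤ inv(D). -/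
open OGraph

lemma aux_invertList_adj_iff {V : Type} (D : OGraph V) (L : List (Set V)) (u v : V) :
    (D.invertList L).adj u v ↔
      ((∑ i : Fin L.length, (L.get i).indicator (fun _ => (1 : ZMod 2)) u *
          (L.get i).indicator (fun _ => (1 : ZMod 2)) v) = 1 ∧ D.adj v u) ∨
      ((∑ i : Fin L.length, (L.get i).indicator (fun _ => (1 : ZMod 2)) u *
          (L.get i).indicator (fun _ => (1 : ZMod 2)) v) ≠ 1 ∧ D.adj u v) := by
  induction L generalizing D with
  | nil =>
    simp [OGraph.invertList]
  | cons X L ih =>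
    have hstep : D.invertList (X :: L) = (D.invert X).invertList L := rfl
    rw [hstep, ih]
    simp only [List.length_cons]
    rw [Fin.sum_univ_succ]
    simp only [List.get_cons_zero, List.get_cons_succ']
    set a : ZMod 2 := X.indicator (fun _ => (1 : ZMod 2)) u *
        X.indicator (fun _ => (1 : ZMod 2)) v with ha
    set b : ZMod 2 := ∑ i : Fin L.length, (L.get i).indicator (fun _ => (1 : ZMod 2)) u *
        (L.get i).indicator (fun _ => (1 : ZMod 2)) v with hb
    by_cases hu : u ∈ X <;> by_cases hv : v ∈ X <;>
      rcases (by decide : ∀ x : ZMod 2, x = 0 ∨ x = 1) b with hb1 | hb1 <;>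
      simp only [OGraph.invert, ha, Set.indicator_apply, hu, hv, hb1, if_true, if_false,
        ite_true, ite_false, mul_one, mul_zero, one_mul, zero_mul, add_zero, zero_add,
        (by decide : (1 : ZMod 2) + 1 = 0)] <;>
      simp [(by decide : (0 : ZMod 2) ≠ 1)] <;>
      tauto

lemma aux_gram_decycling {V : Type} (D : OGraph V)
    (L : List (Set V)) (hL : (D.invertList L).Acyclic) :
    D.IsDecyclingMatrix
      (Matrix.of fun u v => ∑ i : Fin L.length,
        (L.get i).indicator (fun _ => (1 : ZMod 2)) u *
          (L.get i).indicator (fun _ => (1 : ZMod 2)) v) := by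
  constructor
  · ext u v
    simp only [Matrix.transpose_apply, Matrix.of_apply]
    exact Finset.sum_congr rfl fun i _ => mul_comm _ _
  · intro v
    have hrel : (fun u w => ((Matrix.of fun u v => ∑ i : Fin L.length,
        (L.get i).indicator (fun _ => (1 : ZMod 2)) u *
          (L.get i).indicator (fun _ => (1 : ZMod 2)) v) u w = 1 ∧ D.adj w u) ∨
        ((Matrix.of fun u v => ∑ i : Fin L.length,
        (L.get i).indicator (fun _ => (1 : ZMod 2)) u *
          (L.get i).indicator (fun _ => (1 : ZMod 2)) v) u w ≠ 1 ∧ D.adj u w))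
        = (D.invertList L).adj := by
      funext u w
      exact propext (aux_invertList_adj_iff D L u w).symm
    rw [hrel]
    exact hL v

/-- The Gram matrix of the characteristic vectors of a decycling family is a
decycling matrix; consequently `tmr D ≤ inv D`. -/
theorem gram_isDecyclingMatrix_and_tmr_le_inv {V : Type} [Fintype V]
    (D : OGraph V) (hD : D.IsTournament)
    (L : List (Set V)) (hL : (D.invertList L).Acyclic) :
    D.IsDecyclingMatrix
      (Matrix.of fun u v => ∑ i : Fin L.length,
        (L.get i).indicator (fun _ => (1 : ZMod 2)) u *
          (L.get i).indicator (fun _ => (1 : ZMod 2)) v) ∧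
    D.tmr ≤ D.inv := by
  refine ⟨aux_gram_decycling D L hL, ?_⟩
  have hne : {m | ∃ L' : List (Set V), L'.length = m ∧ (D.invertList L').Acyclic}.Nonempty :=
    ⟨L.length, L, rfl, hL⟩
  have hmem := Nat.sInf_mem hne
  obtain ⟨L', hlen, hac⟩ := hmem
  have hdec := aux_gram_decycling D L' hac
  set B : Matrix (Fin L'.length) V (ZMod 2) :=
    Matrix.of fun i v => (L'.get i).indicator (fun _ => (1 : ZMod 2)) v with hB
  have hM : (Matrix.of fun u v => ∑ i : Fin L'.length,
      (L'.get i).indicator (fun _ => (1 : ZMod 2)) u *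
        (L'.get i).indicator (fun _ => (1 : ZMod 2)) v) = B.transpose * B := by
    ext u v
    simp [Matrix.mul_apply, hB]
  have hrk : (B.transpose * B).rank ≤ D.inv := by
    calc (B.transpose * B).rank ≤ B.rank := Matrix.rank_mul_le_right _ _
    _ ≤ Fintype.card (Fin L'.length) := Matrix.rank_le_card_height B
    _ = D.inv := by rw [Fintype.card_fin]; exact hlen
  have : D.tmr ≤ (B.transpose * B).rank := Nat.sInf_le ⟨B.transpose * B, hM ▸ hdec, rfl⟩
  exact le_trans this hrk
end

section
/- Let D₁ and D₂ be oriented graphs with inv(D₁) = 2 and inv(D₂) = k. Then inv(D₁ → D₂) ≥ k + 1. -/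
open OGraph

namespace InvAux

open Classical
noncomputable section

lemma z2cases (x : ZMod 2) : x = 0 ∨ x = 1 := by revert x; decide
lemma zsq (x : ZMod 2) : x * x = x := by revert x; decide
lemma zaddself (x : ZMod 2) : x + x = 0 := by revert x; decide

/-- indicator -/
def ind (P : Prop) : ZMod 2 := if P then 1 else 0

lemma ind_true {P : Prop} (h : P) : ind P = 1 := if_pos h
lemma ind_false {P : Prop} (h : ¬ P) : ind P = 0 := if_neg h

/-- inner product over a fintype -/
def ip {κ : Type} [Fintype κ] (f g : κ → ZMod 2) : ZMod 2 := ∑ j, f j * g j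

lemma ip_comm {κ : Type} [Fintype κ] (f g : κ → ZMod 2) : ip f g = ip g f := by
  unfold ip; exact Finset.sum_congr rfl fun j _ => mul_comm _ _

/-- the parity of the number of sets of `L` containing both `u` and `v` -/
def flipSum {V : Type} (L : List (Set V)) (u v : V) : ZMod 2 :=
  (L.map (fun X => ind (u ∈ X ∧ v ∈ X))).sum

lemma flipSum_nil {V : Type} (u v : V) : flipSum [] u v = 0 := rfl

lemma flipSum_cons {V : Type} (X : Set V) (L : List (Set V)) (u v : V) :
    flipSum (X :: L) u v = ind (u ∈ X ∧ v ∈ X) + flipSum L u v := by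
  simp [flipSum]

lemma flipSum_append {V : Type} (L L' : List (Set V)) (u v : V) :
    flipSum (L ++ L') u v = flipSum L u v + flipSum L' u v := by
  simp [flipSum]

lemma flipSum_comm {V : Type} (L : List (Set V)) (u v : V) :
    flipSum L u v = flipSum L v u := by
  unfold flipSum
  congr 1
  refine List.map_congr_left (fun X _ => ?_)
  unfold ind
  by_cases h : u ∈ X ∧ v ∈ X
  · rw [if_pos h, if_pos ⟨h.2, h.1⟩]
  · rw [if_neg h, if_neg (fun h' => h ⟨h'.2, h'.1⟩)]

/-- Key characterization: the adjacency of `invertList` via flip parities. -/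
lemma invertList_adj {V : Type} (L : List (Set V)) (D : OGraph V) (u v : V) :
    (D.invertList L).adj u v ↔
      ((flipSum L u v = 1 ∧ D.adj v u) ∨ (flipSum L u v ≠ 1 ∧ D.adj u v)) := by
  induction L generalizing D with
  | nil =>
    simp [invertList, flipSum_nil]
  | cons X L ih =>
    have hstep : D.invertList (X :: L) = (D.invert X).invertList L := rfl
    rw [hstep, ih]
    rw [flipSum_cons]
    by_cases hX : u ∈ X ∧ v ∈ X
    · rw [ind_true hX]
      have h1 : (D.invert X).adj v u ↔ D.adj u v := by
        constructor
        · rintro (⟨_, _, h⟩ | ⟨h2, h⟩)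
          · exact h
          · rcases h2 with h2 | h2
            · exact absurd hX.2 h2
            · exact absurd hX.1 h2
        · intro h; exact Or.inl ⟨hX.2, hX.1, h⟩
      have h2 : (D.invert X).adj u v ↔ D.adj v u := by
        constructor
        · rintro (⟨_, _, h⟩ | ⟨h2, h⟩)
          · exact h
          · rcases h2 with h2 | h2
            · exact absurd hX.1 h2
            · exact absurd hX.2 h2
        · intro h; exact Or.inl ⟨hX.1, hX.2, h⟩
      rw [h1, h2]
      have e1 : (1 : ZMod 2) + flipSum L u v = 1 ↔ flipSum L u v ≠ 1 := by
        rcases z2cases (flipSum L u v) with h | h <;> rw [h] <;> decide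
      have e2 : (1 : ZMod 2) + flipSum L u v ≠ 1 ↔ flipSum L u v = 1 := by
        rcases z2cases (flipSum L u v) with h | h <;> rw [h] <;> decide
      rw [e1, e2]
      tauto
    · rw [ind_false hX, zero_add]
      have h1 : (D.invert X).adj v u ↔ D.adj v u := by
        constructor
        · rintro (⟨hv', hu', _⟩ | ⟨_, h⟩)
          · exact absurd ⟨hu', hv'⟩ hX
          · exact h
        · intro h
          exact Or.inr ⟨by tauto, h⟩
      have h2 : (D.invert X).adj u v ↔ D.adj u v := by
        constructor
        · rintro (⟨hu', hv', _⟩ | ⟨_, h⟩)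
          · exact absurd ⟨hu', hv'⟩ hX
          · exact h
        · intro h
          exact Or.inr ⟨by tauto, h⟩
      rw [h1, h2]

/-- membership vectors of a list -/
def memv {V : Type} (L : List (Set V)) (w : V) : Fin L.length → ZMod 2 :=
  fun i => ind (w ∈ L.get i)

lemma ind_and (P Q : Prop) : ind (P ∧ Q) = ind P * ind Q := by
  by_cases hP : P <;> by_cases hQ : Q <;> simp [ind, hP, hQ]

lemma flipSum_eq_ip {V : Type} (L : List (Set V)) (u v : V) :
    flipSum L u v = ip (memv L u) (memv L v) := by
  unfold flipSum ip memv
  conv_lhs => rw [← List.ofFn_get L]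
  rw [List.map_ofFn, List.sum_ofFn]
  simp only [Function.comp]
  refine Finset.sum_congr rfl fun i _ => ?_
  rw [ind_and]

lemma ind_eq_self (x : ZMod 2) : ind (x = 1) = x := by
  rcases z2cases x with h | h <;> simp [ind, h]

/-- list built from a family of vectors -/
def listOf {V : Type} {t : ℕ} (e : V → Fin t → ZMod 2) : List (Set V) :=
  List.ofFn (fun i => {v | e v i = 1})

lemma listOf_length {V : Type} {t : ℕ} (e : V → Fin t → ZMod 2) :
    (listOf e).length = t := by simp [listOf]

lemma flipSum_listOf {V : Type} {t : ℕ} (e : V → Fin t → ZMod 2) (u v : V) :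
    flipSum (listOf e) u v = ip (e u) (e v) := by
  unfold flipSum listOf ip
  rw [List.map_ofFn, List.sum_ofFn]
  simp only [Function.comp]
  refine Finset.sum_congr rfl fun i _ => ?_
  rw [ind_and]
  show ind (e u i = 1) * ind (e v i = 1) = _
  rw [ind_eq_self, ind_eq_self]

lemma transGen_lift {α β : Type} {r : α → α → Prop} {s : β → β → Prop} (f : α → β)
    (h : ∀ a b, r a b → s (f a) (f b)) {a b : α} (ht : Relation.TransGen r a b) :
    Relation.TransGen s (f a) (f b) := by
  induction ht with
  | single hr => exact Relation.TransGen.single (h _ _ hr)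
  | tail _ hr ih => exact Relation.TransGen.tail ih (h _ _ hr)

lemma acyclic_of_rel_iff {V : Type} {D E : OGraph V}
    (h : ∀ u v, D.adj u v ↔ E.adj u v) (hE : E.Acyclic) : D.Acyclic := by
  intro v hv
  exact hE v (transGen_lift id (fun a b hab => (h a b).1 hab) hv)

/-- a relation compatible with an (irreflexive, transitive)-free...
    acyclicity from a monotone ℕ-potential with strict increase -/
lemma acyclic_of_strict_mono {V : Type} {r : V → V → Prop} (f : V → ℕ)
    (h : ∀ u v, r u v → f u < f v) : ∀ v, ¬ Relation.TransGen r v v := by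
  intro v hv
  have : ∀ a b, Relation.TransGen r a b → f a < f b := by
    intro a b ht
    induction ht with
    | single hr => exact h _ _ hr
    | tail _ hr ih => exact lt_trans ih (h _ _ hr)
  exact lt_irrefl _ (this v v hv)

section RealizationAPI

set_option linter.unusedSectionVars false

variable {κ : Type} [Fintype κ] [DecidableEq κ]

/-- delta vector -/
def dl (j : κ) : κ → ZMod 2 := fun j' => ind (j' = j)

lemma ip_add_left (f g h : κ → ZMod 2) : ip (f + g) h = ip f h + ip g h := by
  simp [ip, add_mul, Finset.sum_add_distrib]

lemma ip_add_right (f g h : κ → ZMod 2) : ip f (g + h) = ip f g + ip f h := by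
  simp [ip, mul_add, Finset.sum_add_distrib]

lemma ip_smul_left (c : ZMod 2) (f g : κ → ZMod 2) : ip (c • f) g = c * ip f g := by
  simp [ip, smul_eq_mul, mul_assoc, Finset.mul_sum]

lemma ip_smul_right (c : ZMod 2) (f g : κ → ZMod 2) : ip f (c • g) = c * ip f g := by
  unfold ip
  rw [Finset.mul_sum]
  refine Finset.sum_congr rfl fun j _ => ?_
  simp only [Pi.smul_apply, smul_eq_mul]
  ring

lemma ip_dl_right (f : κ → ZMod 2) (j : κ) : ip f (dl j) = f j := by
  simp [ip, dl, ind, mul_ite, mul_one, mul_zero]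

lemma ip_dl_left (f : κ → ZMod 2) (j : κ) : ip (dl j) f = f j := by
  rw [ip_comm, ip_dl_right]

lemma ip_zero_left (f : κ → ZMod 2) : ip 0 f = 0 := by simp [ip]

lemma ip_eq_zero_of_ne {f g : κ → ZMod 2} (h : ∀ j, f j ≠ 0 → g j = 0) :
    ip f g = 0 := by
  unfold ip
  refine Finset.sum_eq_zero fun j _ => ?_
  by_cases hj : f j = 0
  · rw [hj, zero_mul]
  · rw [h j hj, mul_zero]

end RealizationAPI

section Realization

variable {ι : Type} [Fintype ι] [DecidableEq ι]

lemma alt_real : ∀ (n : ℕ) (A : Finset ι), A.card = n →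
    ∀ (M : ι → ι → ZMod 2), (∀ p q, M p q = M q p) → (∀ p ∈ A, M p p = 0) →
    ∃ (u : Option ι → ZMod 2) (C : ι → Option ι → ZMod 2),
      (∀ j, u j ≠ 0 → j ∈ insert none (A.image some)) ∧
      (∀ p ∈ A, ∀ j, C p j ≠ 0 → j ∈ insert none (A.image some)) ∧
      ip u u = 1 ∧ (∀ p ∈ A, ip u (C p) = 0) ∧
      (∀ p ∈ A, ∀ q ∈ A, ip (C p) (C q) = M p q) := by
  intro n
  induction n using Nat.strong_induction_on with
  | _ n ih =>
    intro A hA M hsymm hdiag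
    by_cases hz : ∀ p ∈ A, ∀ q ∈ A, M p q = 0
    · refine ⟨dl none, fun _ => 0, ?_, ?_, ?_, ?_, ?_⟩
      · intro j hj
        by_cases hjn : j = none
        · simp [hjn]
        · exact absurd (by simp [dl, ind, hjn]) hj
      · intro p _ j hj; simp at hj
      · rw [ip_dl_right]; simp [dl, ind]
      · intro p _; rw [ip_dl_left]; simp
      · intro p hp q hq
        rw [hz p hp q hq]
        exact ip_zero_left _
    · push_neg at hz
      obtain ⟨r, hr, s, hs, hrs0⟩ := hz
      have hrs : M r s = 1 := (z2cases (M r s)).resolve_left hrs0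
      have hrsne : r ≠ s := by
        intro h; rw [h] at hrs0; exact hrs0 (hdiag s hs)
      have hsrne : s ≠ r := Ne.symm hrsne
      set A' : Finset ι := (A.erase r).erase s with hA'
      have hsubA' : A' ⊆ A := fun x hx =>
        Finset.mem_of_mem_erase (Finset.mem_of_mem_erase hx)
      have hrA' : r ∉ A' := by
        intro h
        exact (Finset.notMem_erase r A) (Finset.mem_of_mem_erase h)
      have hsA' : s ∉ A' := fun h => Finset.notMem_erase s (A.erase r) h
      have hcard : A'.card < n := by
        have h1 : (A.erase r).card < A.card := Finset.card_erase_lt_of_mem hr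
        have h2 : A'.card ≤ (A.erase r).card := Finset.card_erase_le
        omega
      set M'' : ι → ι → ZMod 2 :=
        fun a b => M a b + M r a * M s b + M s a * M r b with hM''
      have hsymm'' : ∀ p q, M'' p q = M'' q p := by
        intro p q; simp only [hM'']; rw [hsymm p q]; ring
      have hdiag'' : ∀ p ∈ A', M'' p p = 0 := by
        intro p hp
        simp only [hM'']
        rw [hdiag p (hsubA' hp)]
        rw [mul_comm (M s p) (M r p)]
        rw [zero_add, zaddself]
      obtain ⟨u'', C'', hsupu, hsupC, huu, huC, hCC⟩ :=
        ih A'.card hcard A' rfl M'' hsymm'' hdiag''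
      have hfreshu : ∀ x, x ∉ A' → u'' (some x) = 0 := by
        intro x hx
        by_contra h
        have := hsupu _ h
        simp only [Finset.mem_insert, Finset.mem_image] at this
        rcases this with h' | ⟨y, hy, hxy⟩
        · exact Option.some_ne_none _ h'
        · cases hxy; exact hx hy
      have hfreshC : ∀ p ∈ A', ∀ x, x ∉ A' → C'' p (some x) = 0 := by
        intro p hp x hx
        by_contra h
        have := hsupC p hp _ h
        simp only [Finset.mem_insert, Finset.mem_image] at this
        rcases this with h' | ⟨y, hy, hxy⟩
        · exact Option.some_ne_none _ h'
        · cases hxy; exact hx hy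
      set Cr : Option ι → ZMod 2 := u'' + dl (some r) with hCr
      set Cs : Option ι → ZMod 2 := dl (some r) + dl (some s) with hCs
      set u : Option ι → ZMod 2 := u'' + dl (some r) + dl (some s) with hu
      set C : ι → Option ι → ZMod 2 := fun p =>
        if p = r then Cr else if p = s then Cs
        else (C'' p + (M s p) • Cr + (M r p) • Cs) with hC
      have hCrEq : C r = Cr := by rw [hC]; simp
      have hCsEq : C s = Cs := by
        rw [hC]; simp [hsrne]
      have hmem : ∀ x, x ∈ A → x = r ∨ x = s ∨ x ∈ A' := by
        intro x hx
        by_cases e1 : x = r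
        · exact Or.inl e1
        by_cases e2 : x = s
        · exact Or.inr (Or.inl e2)
        · exact Or.inr (Or.inr (Finset.mem_erase_of_ne_of_mem e2
            (Finset.mem_erase_of_ne_of_mem e1 hx)))
      have hCval : ∀ p ∈ A', C p = C'' p + (M s p) • Cr + (M r p) • Cs := by
        intro p hp
        have h1 : p ≠ r := fun h => hrA' (h ▸ hp)
        have h2 : p ≠ s := fun h => hsA' (h ▸ hp)
        rw [hC]
        simp only [if_neg h1, if_neg h2]
      -- atomic inner product values
      have Iur : ip u'' (dl (some r)) = 0 := by rw [ip_dl_right]; exact hfreshu r hrA'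
      have Ius : ip u'' (dl (some s)) = 0 := by rw [ip_dl_right]; exact hfreshu s hsA'
      have Iru : ip (dl (some r)) u'' = 0 := by rw [ip_comm]; exact Iur
      have Isu : ip (dl (some s)) u'' = 0 := by rw [ip_comm]; exact Ius
      have Idrr : ip (dl (some r) : Option ι → ZMod 2) (dl (some r)) = 1 := by
        rw [ip_dl_right]; simp [dl, ind]
      have Idss : ip (dl (some s) : Option ι → ZMod 2) (dl (some s)) = 1 := by
        rw [ip_dl_right]; simp [dl, ind]
      have Idrs : ip (dl (some r) : Option ι → ZMod 2) (dl (some s)) = 0 := by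
        rw [ip_dl_right]; simp [dl, ind, hsrne]
      have Idsr : ip (dl (some s) : Option ι → ZMod 2) (dl (some r)) = 0 := by
        rw [ip_dl_right]; simp [dl, ind, hrsne]
      have ICpr : ∀ p ∈ A', ip (C'' p) (dl (some r)) = 0 := by
        intro p hp; rw [ip_dl_right]; exact hfreshC p hp r hrA'
      have ICps : ∀ p ∈ A', ip (C'' p) (dl (some s)) = 0 := by
        intro p hp; rw [ip_dl_right]; exact hfreshC p hp s hsA'
      have IrCp : ∀ p ∈ A', ip (dl (some r)) (C'' p) = 0 := by
        intro p hp; rw [ip_comm]; exact ICpr p hp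
      have IsCp : ∀ p ∈ A', ip (dl (some s)) (C'' p) = 0 := by
        intro p hp; rw [ip_comm]; exact ICps p hp
      have hCu : ∀ p ∈ A', ip (C'' p) u'' = 0 := by
        intro p hp; rw [ip_comm]; exact huC p hp
      -- Gram facts
      have GCrCr : ip Cr Cr = 0 := by
        rw [hCr]
        simp only [ip_add_left, ip_add_right]
        rw [huu, Iur, Iru, Idrr]
        decide
      have GCsCs : ip Cs Cs = 0 := by
        rw [hCs]
        simp only [ip_add_left, ip_add_right]
        rw [Idrr, Idrs, Idsr, Idss]
        decide
      have GCrCs : ip Cr Cs = 1 := by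
        rw [hCr, hCs]
        simp only [ip_add_left, ip_add_right]
        rw [Iur, Ius, Idrr, Idrs]
        decide
      have GCsCr : ip Cs Cr = 1 := by rw [ip_comm]; exact GCrCs
      have Guu : ip u u = 1 := by
        rw [hu]
        simp only [ip_add_left, ip_add_right]
        rw [huu, Iur, Ius, Iru, Isu, Idrr, Idrs, Idsr, Idss]
        decide
      have GuCr : ip u Cr = 0 := by
        rw [hu, hCr]
        simp only [ip_add_left, ip_add_right]
        rw [huu, Iur, Iru, Isu, Idrr, Idsr]
        decide
      have GuCs : ip u Cs = 0 := by
        rw [hu, hCs]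
        simp only [ip_add_left, ip_add_right]
        rw [Iur, Ius, Idrr, Idrs, Idsr, Idss]
        decide
      have GuCpp : ∀ p ∈ A', ip u (C'' p) = 0 := by
        intro p hp
        rw [hu]
        simp only [ip_add_left]
        rw [huC p hp, IrCp p hp, IsCp p hp]
        decide
      have GCrCpp : ∀ p ∈ A', ip Cr (C'' p) = 0 := by
        intro p hp
        rw [hCr]
        simp only [ip_add_left]
        rw [huC p hp, IrCp p hp]
        decide
      have GCsCpp : ∀ p ∈ A', ip Cs (C'' p) = 0 := by
        intro p hp
        rw [hCs]
        simp only [ip_add_left]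
        rw [IrCp p hp, IsCp p hp]
        decide
      have GCppCr : ∀ p ∈ A', ip (C'' p) Cr = 0 := by
        intro p hp; rw [ip_comm]; exact GCrCpp p hp
      have GCppCs : ∀ p ∈ A', ip (C'' p) Cs = 0 := by
        intro p hp; rw [ip_comm]; exact GCsCpp p hp
      have GCrCp : ∀ p ∈ A', ip Cr (C p) = M r p := by
        intro p hp
        rw [hCval p hp]
        simp only [ip_add_right, ip_smul_right]
        rw [GCrCpp p hp, GCrCr, GCrCs]
        ring
      have GCsCp : ∀ p ∈ A', ip Cs (C p) = M s p := by
        intro p hp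
        rw [hCval p hp]
        simp only [ip_add_right, ip_smul_right]
        rw [GCsCpp p hp, GCsCr, GCsCs]
        ring
      have GCpCr : ∀ p ∈ A', ip (C p) Cr = M r p := by
        intro p hp; rw [ip_comm]; exact GCrCp p hp
      have GCpCs : ∀ p ∈ A', ip (C p) Cs = M s p := by
        intro p hp; rw [ip_comm]; exact GCsCp p hp
      have GuCp : ∀ p ∈ A', ip u (C p) = 0 := by
        intro p hp
        rw [hCval p hp]
        simp only [ip_add_right, ip_smul_right]
        rw [GuCpp p hp, GuCr, GuCs]
        ring
      have GCpCq : ∀ p ∈ A', ∀ q ∈ A', ip (C p) (C q) = M p q := by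
        intro p hp q hq
        rw [hCval p hp, hCval q hq]
        simp only [ip_add_left, ip_add_right, ip_smul_left, ip_smul_right]
        rw [hCC p hp q hq, GCppCr p hp, GCppCs p hp, GCrCpp q hq, GCsCpp q hq,
          GCrCr, GCrCs, GCsCr, GCsCs]
        simp only [hM'']
        rw [hsymm r q, hsymm s q]
        have h2 : (2 : ZMod 2) = 0 := by decide
        ring_nf
        rw [h2]
        ring
      -- support helpers
      have hmono : insert none (A'.image some) ⊆ insert none (A.image some) := by
        apply Finset.insert_subset_insert
        exact Finset.image_subset_image hsubA'
      have hjr : ∀ j, (dl (some r) : Option ι → ZMod 2) j ≠ 0 →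
          j ∈ insert none (A.image some) := by
        intro j h
        have : j = some r := by
          by_contra hne; exact h (by simp [dl, ind, hne])
        rw [this]
        exact Finset.mem_insert_of_mem (Finset.mem_image_of_mem _ hr)
      have hjs : ∀ j, (dl (some s) : Option ι → ZMod 2) j ≠ 0 →
          j ∈ insert none (A.image some) := by
        intro j h
        have : j = some s := by
          by_contra hne; exact h (by simp [dl, ind, hne])
        rw [this]
        exact Finset.mem_insert_of_mem (Finset.mem_image_of_mem _ hs)
      have hjCr : ∀ j, Cr j ≠ 0 → j ∈ insert none (A.image some) := by
        intro j h
        have : u'' j ≠ 0 ∨ (dl (some r) : Option ι → ZMod 2) j ≠ 0 := by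
          by_contra hcon
          push_neg at hcon
          apply h
          show u'' j + dl (some r) j = 0
          rw [hcon.1, hcon.2]; decide
        rcases this with h' | h'
        · exact hmono (hsupu j h')
        · exact hjr j h'
      have hjCs : ∀ j, Cs j ≠ 0 → j ∈ insert none (A.image some) := by
        intro j h
        have : (dl (some r) : Option ι → ZMod 2) j ≠ 0 ∨
            (dl (some s) : Option ι → ZMod 2) j ≠ 0 := by
          by_contra hcon
          push_neg at hcon
          apply h
          show dl (some r) j + dl (some s) j = 0
          rw [hcon.1, hcon.2]; decide
        rcases this with h' | h'
        · exact hjr j h'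
        · exact hjs j h'
      refine ⟨u, C, ?_, ?_, Guu, ?_, ?_⟩
      · intro j hj
        rw [hu] at hj
        have : u'' j ≠ 0 ∨ (dl (some r) : Option ι → ZMod 2) j ≠ 0 ∨
            (dl (some s) : Option ι → ZMod 2) j ≠ 0 := by
          by_contra hcon
          push_neg at hcon
          apply hj
          show u'' j + dl (some r) j + dl (some s) j = 0
          rw [hcon.1, hcon.2.1, hcon.2.2]; decide
        rcases this with h | h | h
        · exact hmono (hsupu j h)
        · exact hjr j h
        · exact hjs j h
      · intro p hp j hj
        rcases hmem p hp with ep | ep | ep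
        · rw [ep, hCrEq] at hj; exact hjCr j hj
        · rw [ep, hCsEq] at hj; exact hjCs j hj
        · rw [hCval p ep] at hj
          have : C'' p j ≠ 0 ∨ ((M s p) • Cr) j ≠ 0 ∨ ((M r p) • Cs) j ≠ 0 := by
            by_contra hcon
            push_neg at hcon
            apply hj
            show C'' p j + (M s p • Cr) j + (M r p • Cs) j = 0
            rw [hcon.1, hcon.2.1, hcon.2.2]; decide
          rcases this with h | h | h
          · exact hmono (hsupC p ep j h)
          · apply hjCr j
            intro hcon
            apply h
            show M s p * Cr j = 0
            rw [hcon, mul_zero]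
          · apply hjCs j
            intro hcon
            apply h
            show M r p * Cs j = 0
            rw [hcon, mul_zero]
      · intro p hp
        rcases hmem p hp with ep | ep | ep
        · rw [ep, hCrEq]; exact GuCr
        · rw [ep, hCsEq]; exact GuCs
        · exact GuCp p ep
      · intro p hp q hq
        rcases hmem p hp with ep | ep | ep <;> rcases hmem q hq with eq | eq | eq
        · rw [ep, eq, hCrEq, GCrCr, hdiag r hr]
        · rw [ep, eq, hCrEq, hCsEq, GCrCs, hrs]
        · rw [ep, hCrEq, GCrCp q eq]
        · rw [ep, eq, hCsEq, hCrEq, GCsCr, hsymm s r, hrs]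
        · rw [ep, eq, hCsEq, GCsCs, hdiag s hs]
        · rw [ep, hCsEq, GCsCp q eq]
        · rw [eq, hCrEq, GCpCr p ep, hsymm r p]
        · rw [eq, hCsEq, GCpCs p ep, hsymm s p]
        · exact GCpCq p ep q eq

end Realization

section Realization2

variable {ι : Type} [Fintype ι] [DecidableEq ι]

/-- Realization of a symmetric matrix with a nonzero diagonal entry on `A`
as a Gram family supported on at most `A.card` coordinates. -/
lemma gpp_real : ∀ (n : ℕ) (A : Finset ι), A.card = n →
    ∀ (M : ι → ι → ZMod 2), (∀ p q, M p q = M q p) →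
    ∀ p₀ ∈ A, M p₀ p₀ = 1 →
    ∃ (B : Finset (Option ι)) (C : ι → Option ι → ZMod 2),
      B ⊆ insert none (A.image some) ∧ B.card ≤ A.card ∧
      (∀ p ∈ A, ∀ j, C p j ≠ 0 → j ∈ B) ∧
      (∀ p ∈ A, ∀ q ∈ A, ip (C p) (C q) = M p q) := by
  intro n
  induction n using Nat.strong_induction_on with
  | _ n ih =>
    intro A hA M hsymm p₀ hp₀ hMp₀
    set A' : Finset ι := A.erase p₀ with hA'
    have hsubA' : A' ⊆ A := Finset.erase_subset _ _
    have hp₀A' : p₀ ∉ A' := Finset.notMem_erase _ _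
    have hcard : A'.card < n := by
      have h1 := Finset.card_erase_lt_of_mem hp₀
      have h2 : A'.card = (A.erase p₀).card := rfl
      omega
    set M' : ι → ι → ZMod 2 := fun a b => M a b + M p₀ a * M p₀ b with hM'
    have hsymm' : ∀ p q, M' p q = M' q p := by
      intro p q; simp only [hM']; rw [hsymm p q]; ring
    have hmem : ∀ x, x ∈ A → x = p₀ ∨ x ∈ A' := by
      intro x hx
      by_cases e : x = p₀
      · exact Or.inl e
      · exact Or.inr (Finset.mem_erase_of_ne_of_mem e hx)
    by_cases hnd : ∃ p ∈ A', M' p p = 1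
    · obtain ⟨p₁, hp₁, hMp₁⟩ := hnd
      obtain ⟨B', C', hB'sub, hB'card, hsupC', hCC'⟩ :=
        ih A'.card hcard A' rfl M' hsymm' p₁ hp₁ hMp₁
      have hfresh : some p₀ ∉ B' := by
        intro h
        have := hB'sub h
        simp only [Finset.mem_insert, Finset.mem_image] at this
        rcases this with h' | ⟨y, hy, hxy⟩
        · exact Option.some_ne_none _ h'
        · cases hxy; exact hp₀A' hy
      set C : ι → Option ι → ZMod 2 := fun p =>
        if p = p₀ then dl (some p₀) else (M p₀ p) • dl (some p₀) + C' p with hC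
      have hCp₀ : C p₀ = dl (some p₀) := by rw [hC]; simp
      have hCval : ∀ p ∈ A', C p = (M p₀ p) • dl (some p₀) + C' p := by
        intro p hp
        have h1 : p ≠ p₀ := fun h => hp₀A' (h ▸ hp)
        rw [hC]; simp only [if_neg h1]
      have hC'p₀0 : ∀ p ∈ A', C' p (some p₀) = 0 := by
        intro p hp
        by_contra h
        exact hfresh (hsupC' p hp _ h)
      have Idpp : ip (dl (some p₀) : Option ι → ZMod 2) (dl (some p₀)) = 1 := by
        rw [ip_dl_right]; simp [dl, ind]
      have IdC' : ∀ p ∈ A', ip (dl (some p₀)) (C' p) = 0 := by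
        intro p hp; rw [ip_dl_left]; exact hC'p₀0 p hp
      have IC'd : ∀ p ∈ A', ip (C' p) (dl (some p₀)) = 0 := by
        intro p hp; rw [ip_dl_right]; exact hC'p₀0 p hp
      refine ⟨insert (some p₀) B', C, ?_, ?_, ?_, ?_⟩
      · intro x hx
        rcases Finset.mem_insert.1 hx with rfl | hx'
        · exact Finset.mem_insert_of_mem (Finset.mem_image_of_mem _ hp₀)
        · exact (Finset.insert_subset_insert _
            (Finset.image_subset_image hsubA')) (hB'sub hx')
      · have h1 : (insert (some p₀) B').card = B'.card + 1 :=
          Finset.card_insert_of_notMem hfresh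
        have h2 : A.card = A'.card + 1 := by
          rw [hA']
          exact (Finset.card_erase_add_one hp₀).symm
        omega
      · intro p hp j hj
        rcases hmem p hp with ep | ep
        · rw [ep, hCp₀] at hj
          have : j = some p₀ := by
            by_contra hne; exact hj (by simp [dl, ind, hne])
          rw [this]; exact Finset.mem_insert_self _ _
        · rw [hCval p ep] at hj
          have : ((M p₀ p) • (dl (some p₀) : Option ι → ZMod 2)) j ≠ 0 ∨
              C' p j ≠ 0 := by
            by_contra hcon
            push_neg at hcon
            apply hj
            show (M p₀ p • dl (some p₀)) j + C' p j = 0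
            rw [hcon.1, hcon.2]; decide
          rcases this with h | h
          · have : j = some p₀ := by
              by_contra hne
              apply h
              show M p₀ p * dl (some p₀) j = 0
              simp [dl, ind, hne]
            rw [this]; exact Finset.mem_insert_self _ _
          · exact Finset.mem_insert_of_mem (hsupC' p ep j h)
      · intro p hp q hq
        rcases hmem p hp with ep | ep <;> rcases hmem q hq with eq | eq
        · rw [ep, eq, hCp₀, Idpp, hMp₀]
        · rw [ep, hCp₀, hCval q eq, ip_add_right, ip_smul_right, Idpp, IdC' q eq]
          ring
        · rw [eq, hCp₀, hCval p ep, ip_add_left, ip_smul_left, Idpp, IC'd p ep,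
            hsymm p₀ p]
          ring
        · rw [hCval p ep, hCval q eq]
          simp only [ip_add_left, ip_add_right, ip_smul_left, ip_smul_right]
          rw [Idpp, IdC' q eq, IC'd p ep, hCC' p ep q eq]
          simp only [hM']
          have h2 : (2 : ZMod 2) = 0 := by decide
          ring_nf
          rw [h2]
          ring
    · -- alternating remainder
      push_neg at hnd
      have hdiag' : ∀ p ∈ A', M' p p = 0 := by
        intro p hp
        rcases z2cases (M' p p) with h | h
        · exact h
        · exact absurd h (hnd p hp)
      obtain ⟨u, C', hsupu, hsupC', huu, huC', hCC'⟩ :=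
        alt_real A'.card A' rfl M' hsymm' hdiag'
      set C : ι → Option ι → ZMod 2 := fun p =>
        if p = p₀ then u else (M p₀ p) • u + C' p with hC
      have hCp₀ : C p₀ = u := by rw [hC]; simp
      have hCval : ∀ p ∈ A', C p = (M p₀ p) • u + C' p := by
        intro p hp
        have h1 : p ≠ p₀ := fun h => hp₀A' (h ▸ hp)
        rw [hC]; simp only [if_neg h1]
      have hC'u : ∀ p ∈ A', ip (C' p) u = 0 := by
        intro p hp; rw [ip_comm]; exact huC' p hp
      refine ⟨insert none (A'.image some), C, ?_, ?_, ?_, ?_⟩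
      · apply Finset.insert_subset_insert
        exact Finset.image_subset_image hsubA'
      · have h1 : (A'.image some).card ≤ A'.card := Finset.card_image_le
        have h2 : none ∉ (A'.image some : Finset (Option ι)) := by
          simp
        have h3 : (insert none (A'.image some) : Finset (Option ι)).card =
            (A'.image some).card + 1 := Finset.card_insert_of_notMem h2
        have h4 : A.card = A'.card + 1 := by
          rw [hA']
          exact (Finset.card_erase_add_one hp₀).symm
        omega
      · intro p hp j hj
        rcases hmem p hp with ep | ep
        · rw [ep, hCp₀] at hj
          exact hsupu j hj
        · rw [hCval p ep] at hj
          have : ((M p₀ p) • u) j ≠ 0 ∨ C' p j ≠ 0 := by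
            by_contra hcon
            push_neg at hcon
            apply hj
            show (M p₀ p • u) j + C' p j = 0
            rw [hcon.1, hcon.2]; decide
          rcases this with h | h
          · apply hsupu j
            intro hcon
            apply h
            show M p₀ p * u j = 0
            rw [hcon, mul_zero]
          · exact hsupC' p ep j h
      · intro p hp q hq
        rcases hmem p hp with ep | ep <;> rcases hmem q hq with eq | eq
        · rw [ep, eq, hCp₀, huu, hMp₀]
        · rw [ep, hCp₀, hCval q eq, ip_add_right, ip_smul_right, huu, huC' q eq]
          ring
        · rw [eq, hCp₀, hCval p ep, ip_add_left, ip_smul_left, huu, hC'u p ep,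
            hsymm p₀ p]
          ring
        · rw [hCval p ep, hCval q eq]
          simp only [ip_add_left, ip_add_right, ip_smul_left, ip_smul_right]
          rw [huu, huC' q eq, hC'u p ep, hCC' p ep q eq]
          simp only [hM']
          have h2 : (2 : ZMod 2) = 0 := by decide
          ring_nf
          rw [h2]
          ring

/-- Realization with a known radical vector: a symmetric matrix `M` on `ι` with a
radical vector `x₀ ≠ 0` and a diagonal `1` away from the support of `x₀` can be realized
as a Gram family supported on at most `card ι - 1` coordinates. -/
lemma radical_real (M : ι → ι → ZMod 2) (hsymm : ∀ p q, M p q = M q p)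
    (x₀ : ι → ZMod 2) (hrad : ∀ q, ∑ p, x₀ p * M p q = 0)
    (pstar : ι) (hpstar : M pstar pstar = 1)
    (q₀ : ι) (hq₀ : x₀ q₀ = 1) (hne : q₀ ≠ pstar) :
    ∃ (B : Finset (Option ι)) (C : ι → Option ι → ZMod 2),
      B.card + 1 ≤ Fintype.card ι ∧
      (∀ p, ∀ j, C p j ≠ 0 → j ∈ B) ∧
      (∀ p q, ip (C p) (C q) = M p q) := by
  set A : Finset ι := Finset.univ.erase q₀ with hAdef
  have hpsA : pstar ∈ A := Finset.mem_erase_of_ne_of_mem (Ne.symm hne) (Finset.mem_univ _)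
  obtain ⟨B, C, hBsub, hBcard, hsupC, hCC⟩ :=
    gpp_real A.card A rfl M hsymm pstar hpsA hpstar
  have hAcard : A.card + 1 = Fintype.card ι := by
    rw [hAdef]
    rw [Finset.card_erase_of_mem (Finset.mem_univ _), Finset.card_univ]
    have : 1 ≤ Fintype.card ι := Fintype.card_pos_iff.2 ⟨q₀⟩
    omega
  have hmemA : ∀ x, x ≠ q₀ → x ∈ A :=
    fun x hx => Finset.mem_erase_of_ne_of_mem hx (Finset.mem_univ _)
  -- replace the q₀ column by the radical combination
  set S : Finset ι := A.filter (fun p => x₀ p = 1) with hS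
  have hSA : ∀ x ∈ S, x ∈ A := by
    intro x hx
    rw [hS] at hx
    exact (Finset.mem_filter.1 hx).1
  set Cfull : ι → Option ι → ZMod 2 := fun p =>
    if p = q₀ then (fun j => ∑ p' ∈ S, C p' j) else C p with hCfull
  have hCfullA : ∀ p ∈ A, Cfull p = C p := by
    intro p hp
    have : p ≠ q₀ := by
      intro h
      rw [hAdef] at hp
      exact (Finset.notMem_erase q₀ _) (h ▸ hp)
    rw [hCfull]; simp only [if_neg this]
  have hCfullq₀ : Cfull q₀ = fun j => ∑ p' ∈ S, C p' j := by
    rw [hCfull]; simp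
  -- weighted sum identity : for any vector g,  ∑_{p∈S} g p = ∑_{p∈A} x₀ p * g p
  have hwt : ∀ g : ι → ZMod 2, ∑ p ∈ S, g p = ∑ p ∈ A, x₀ p * g p := by
    intro g
    rw [hS, Finset.sum_filter]
    refine Finset.sum_congr rfl fun p _ => ?_
    rcases z2cases (x₀ p) with h | h
    · simp [h]
    · simp [h]
  -- radical identity restricted to A
  have hradA : ∀ q, ∑ p ∈ A, x₀ p * M p q = M q₀ q := by
    intro q
    have h1 : ∑ p, x₀ p * M p q = 0 := hrad q
    have h2 : ∑ p, x₀ p * M p q =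
        x₀ q₀ * M q₀ q + ∑ p ∈ A, x₀ p * M p q := by
      rw [hAdef]
      exact (Finset.add_sum_erase _ _ (Finset.mem_univ q₀)).symm
    rw [h2, hq₀, one_mul] at h1
    rcases z2cases (∑ p ∈ A, x₀ p * M p q) with h | h
    · rw [h] at h1 ⊢
      rcases z2cases (M q₀ q) with h' | h'
      · rw [h']
      · rw [h'] at h1; exact absurd h1 (by decide)
    · rw [h] at h1 ⊢
      rcases z2cases (M q₀ q) with h' | h'
      · rw [h'] at h1; exact absurd h1 (by decide)
      · rw [h']
  have ipsum_left : ∀ (g : Option ι → ZMod 2),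
      ip (fun j => ∑ p' ∈ S, C p' j) g = ∑ p' ∈ S, ip (C p') g := by
    intro g
    unfold ip
    rw [Finset.sum_comm]
    refine Finset.sum_congr rfl fun j _ => ?_
    rw [Finset.sum_mul]
  have ipsum_right : ∀ (g : Option ι → ZMod 2),
      ip g (fun j => ∑ p' ∈ S, C p' j) = ∑ p' ∈ S, ip g (C p') := by
    intro g
    unfold ip
    rw [Finset.sum_comm]
    refine Finset.sum_congr rfl fun j _ => ?_
    rw [Finset.mul_sum]
  refine ⟨B, Cfull, by omega, ?_, ?_⟩
  · intro p j hj
    by_cases hp : p = q₀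
    · rw [hp, hCfullq₀] at hj
      by_contra hjB
      apply hj
      refine Finset.sum_eq_zero fun p' hp' => ?_
      by_contra h
      exact hjB (hsupC p' (hSA p' hp') j h)
    · rw [hCfullA p (hmemA p hp)] at hj
      exact hsupC p (hmemA p hp) j hj
  · intro p q
    by_cases hp : p = q₀ <;> by_cases hq : q = q₀
    · rw [hp, hq, hCfullq₀, ipsum_left]
      have : ∀ p' ∈ S, ip (C p') (fun j => ∑ p'' ∈ S, C p'' j) =
          ∑ p'' ∈ S, ip (C p') (C p'') := fun p' _ => ipsum_right _
      rw [Finset.sum_congr rfl this]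
      have step1 : ∀ p' ∈ S, ∑ p'' ∈ S, ip (C p') (C p'') = M q₀ p' := by
        intro p' hp'
        have : ∀ p'' ∈ S, ip (C p') (C p'') = M p' p'' := fun p'' hp'' =>
          hCC p' (hSA p' hp') p'' (hSA p'' hp'')
        rw [Finset.sum_congr rfl this, hwt (fun p'' => M p' p'')]
        have : ∀ p'' ∈ A, x₀ p'' * M p' p'' = x₀ p'' * M p'' p' := by
          intro p'' _; rw [hsymm p' p'']
        rw [Finset.sum_congr rfl this, hradA p', hsymm q₀ p']
      rw [Finset.sum_congr rfl step1, hwt (fun p' => M q₀ p')]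
      have : ∀ p' ∈ A, x₀ p' * M q₀ p' = x₀ p' * M p' q₀ := by
        intro p' _; rw [hsymm q₀ p']
      rw [Finset.sum_congr rfl this, hradA q₀]
    · rw [hp, hCfullq₀, hCfullA q (hmemA q hq), ipsum_left]
      have : ∀ p' ∈ S, ip (C p') (C q) = M p' q := fun p' hp' =>
        hCC p' (hSA p' hp') q (hmemA q hq)
      rw [Finset.sum_congr rfl this, hwt (fun p' => M p' q), hradA q]
    · rw [hq, hCfullq₀, hCfullA p (hmemA p hp), ipsum_right]
      have : ∀ p' ∈ S, ip (C p) (C p') = M p' p := fun p' hp' => by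
        rw [hCC p (hmemA p hp) p' (hSA p' hp'), hsymm p p']
      rw [Finset.sum_congr rfl this, hwt (fun p' => M p' p), hradA p, hsymm q₀ p]
    · rw [hCfullA p (hmemA p hp), hCfullA q (hmemA q hq)]
      exact hCC p (hmemA p hp) q (hmemA q hq)

end Realization2

section Flips

variable {W : Type}

/-- relation obtained from `D` by flipping pairs where `F` is 1 -/
def flipRel (D : OGraph W) (F : W → W → ZMod 2) : W → W → Prop :=
  fun v w => (F v w = 1 ∧ D.adj w v) ∨ (F v w ≠ 1 ∧ D.adj v w)

lemma invertList_adj' (L : List (Set W)) (D : OGraph W) (u v : W) :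
    (D.invertList L).adj u v ↔ flipRel D (flipSum L) u v :=
  invertList_adj L D u v

lemma transgen_swap {r : W → W → Prop} {a b : W}
    (h : Relation.TransGen (fun x y => r y x) a b) : Relation.TransGen r b a := by
  induction h with
  | single hr => exact Relation.TransGen.single hr
  | tail _ hr ih => exact Relation.TransGen.head hr ih

/-- flipping by `F + F'` equals flipping the `F`-flip by `F'` -/
lemma flip_flip (D : OGraph W) (F F' : W → W → ZMod 2)
    (hF : ∀ v w, F v w = F w v) (v w : W) :
    flipRel D (fun a b => F a b + F' a b) v w ↔
      ((F' v w = 1 ∧ flipRel D F w v) ∨ (F' v w ≠ 1 ∧ flipRel D F v w)) := by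
  unfold flipRel
  simp only []
  rw [hF w v]
  rcases z2cases (F v w) with h1 | h1 <;> rcases z2cases (F' v w) with h2 | h2 <;>
    rw [h1, h2] <;> norm_num <;>
    simp [show ((2:ZMod 2) = 1) ↔ False from by decide]

/-- Inverting two "downward-closed" sets of an acyclic relation keeps it acyclic. -/
lemma inv2_acyclic (G : W → W → Prop) (hG : ∀ v, ¬ Relation.TransGen G v v)
    (S S' : Set W)
    (hS : ∀ v w, G w v → v ∈ S → w ∈ S)
    (hS' : ∀ v w, G w v → v ∈ S' → w ∈ S')
    (F : W → W → ZMod 2)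
    (hF : ∀ v w, F v w = ind (v ∈ S ∧ w ∈ S) + ind (v ∈ S' ∧ w ∈ S')) :
    ∀ v, ¬ Relation.TransGen
      (fun v w => (F v w = 1 ∧ G w v) ∨ (F v w ≠ 1 ∧ G v w)) v v := by
  set G' : W → W → Prop :=
    fun v w => (F v w = 1 ∧ G w v) ∨ (F v w ≠ 1 ∧ G v w) with hG'
  set f : W → ℕ := fun v =>
    if v ∈ S then (if v ∈ S' then 2 else 0) else (if v ∈ S' then 1 else 3) with hf
  have step : ∀ v w, G' v w → f v ≤ f w ∧
      (f v = f w → ((f v ≤ 1 ∧ G w v) ∨ (2 ≤ f v ∧ G v w))) := by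
    intro v w hvw
    have getGwv : F v w = 1 → G w v := by
      intro hFval
      rcases hvw with ⟨_, h⟩ | ⟨hne, _⟩
      · exact h
      · exact absurd hFval hne
    have getGvw : F v w = 0 → G v w := by
      intro hFval
      rcases hvw with ⟨h1, _⟩ | ⟨_, h⟩
      · rw [hFval] at h1; exact absurd h1 (by decide)
      · exact h
    by_cases hvS : v ∈ S <;> by_cases hvS' : v ∈ S' <;>
      by_cases hwS : w ∈ S <;> by_cases hwS' : w ∈ S'
    -- v ∈ A (S ∩ S')
    · -- AA
      have hGvw : G v w := getGvw (by
        rw [hF, ind_true ⟨hvS, hwS⟩, ind_true ⟨hvS', hwS'⟩]; decide)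
      have h1 : f v = 2 := by simp [hf, hvS, hvS']
      have h2 : f w = 2 := by simp [hf, hwS, hwS']
      exact ⟨by omega, fun _ => Or.inr ⟨by omega, hGvw⟩⟩
    · -- AP
      have hGwv : G w v := getGwv (by
        rw [hF, ind_true ⟨hvS, hwS⟩, ind_false (fun h => hwS' h.2)]; decide)
      exact absurd (hS' v w hGwv hvS') hwS'
    · -- AQ
      have hGwv : G w v := getGwv (by
        rw [hF, ind_false (fun h => hwS h.2), ind_true ⟨hvS', hwS'⟩]; decide)
      exact absurd (hS v w hGwv hvS) hwS
    · -- AC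
      have h1 : f v = 2 := by simp [hf, hvS, hvS']
      have h2 : f w = 3 := by simp [hf, hwS, hwS']
      exact ⟨by omega, fun he => by omega⟩
    · -- PA
      have h1 : f v = 0 := by simp [hf, hvS, hvS']
      have h2 : f w = 2 := by simp [hf, hwS, hwS']
      exact ⟨by omega, fun he => by omega⟩
    · -- PP
      have hGwv : G w v := getGwv (by
        rw [hF, ind_true ⟨hvS, hwS⟩, ind_false (fun h => hvS' h.1)]; decide)
      have h1 : f v = 0 := by simp [hf, hvS, hvS']
      exact ⟨by
        have h2 : f w = 0 := by simp [hf, hwS, hwS']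
        omega, fun _ => Or.inl ⟨by omega, hGwv⟩⟩
    · -- PQ : impossible
      have hGvw : G v w := getGvw (by
        rw [hF, ind_false (fun h => hwS h.2), ind_false (fun h => hvS' h.1)]; decide)
      exact absurd (hS' w v hGvw hwS') hvS'
    · -- PC
      have h1 : f v = 0 := by simp [hf, hvS, hvS']
      have h2 : f w = 3 := by simp [hf, hwS, hwS']
      exact ⟨by omega, fun he => by omega⟩
    · -- QA
      have h1 : f v = 1 := by simp [hf, hvS, hvS']
      have h2 : f w = 2 := by simp [hf, hwS, hwS']
      exact ⟨by omega, fun he => by omega⟩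
    · -- QP : impossible
      have hGvw : G v w := getGvw (by
        rw [hF, ind_false (fun h => hvS h.1), ind_false (fun h => hwS' h.2)]; decide)
      exact absurd (hS w v hGvw hwS) hvS
    · -- QQ
      have hGwv : G w v := getGwv (by
        rw [hF, ind_false (fun h => hvS h.1), ind_true ⟨hvS', hwS'⟩]; decide)
      have h1 : f v = 1 := by simp [hf, hvS, hvS']
      exact ⟨by
        have h2 : f w = 1 := by simp [hf, hwS, hwS']
        omega, fun _ => Or.inl ⟨by omega, hGwv⟩⟩
    · -- QC
      have h1 : f v = 1 := by simp [hf, hvS, hvS']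
      have h2 : f w = 3 := by simp [hf, hwS, hwS']
      exact ⟨by omega, fun he => by omega⟩
    · -- CA : impossible
      have hGvw : G v w := getGvw (by
        rw [hF, ind_false (fun h => hvS h.1), ind_false (fun h => hvS' h.1)]; decide)
      exact absurd (hS w v hGvw hwS) hvS
    · -- CP : impossible
      have hGvw : G v w := getGvw (by
        rw [hF, ind_false (fun h => hvS h.1), ind_false (fun h => hvS' h.1)]; decide)
      exact absurd (hS w v hGvw hwS) hvS
    · -- CQ : impossible
      have hGvw : G v w := getGvw (by
        rw [hF, ind_false (fun h => hvS h.1), ind_false (fun h => hvS' h.1)]; decide)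
      exact absurd (hS' w v hGvw hwS') hvS'
    · -- CC
      have hGvw : G v w := getGvw (by
        rw [hF, ind_false (fun h => hvS h.1), ind_false (fun h => hvS' h.1)]; decide)
      have h1 : f v = 3 := by simp [hf, hvS, hvS']
      exact ⟨by
        have h2 : f w = 3 := by simp [hf, hwS, hwS']
        omega, fun _ => Or.inr ⟨by omega, hGvw⟩⟩
  -- bookkeeping along transitive closures
  set K : W → W → Prop := fun a b => G' a b ∧ f a = f b with hK
  have tg : ∀ x y, Relation.TransGen G' x y →
      f x ≤ f y ∧ (f x = f y → Relation.TransGen K x y) := by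
    intro x y h
    induction h with
    | single hr =>
      exact ⟨(step _ _ hr).1, fun he => Relation.TransGen.single ⟨hr, he⟩⟩
    | @tail b c hxz hr ih =>
      have h1 := (step b c hr).1
      refine ⟨le_trans ih.1 h1, fun he => ?_⟩
      have he1 : f x = f b := le_antisymm ih.1 (by omega)
      exact Relation.TransGen.tail (ih.2 he1) ⟨hr, by omega⟩
  have fconst : ∀ x y, Relation.TransGen K x y → f x = f y := by
    intro x y h
    induction h with
    | single hr => exact hr.2
    | tail _ hr ih => exact ih.trans hr.2
  have tgK : ∀ x y, Relation.TransGen K x y →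
      Relation.TransGen (fun a b => K a b ∧ f a = f x) x y := by
    intro x y h
    induction h with
    | single hr => exact Relation.TransGen.single ⟨hr, rfl⟩
    | @tail b c hxz hr ih =>
      exact Relation.TransGen.tail ih ⟨hr, (fconst x b hxz).symm⟩
  intro v hv
  have h2 : Relation.TransGen K v v := (tg v v hv).2 rfl
  have h3 := tgK v v h2
  by_cases hfv : f v ≤ 1
  · have : Relation.TransGen (fun a b => G b a) v v := by
      refine transGen_lift id (fun a b hab => ?_) h3
      rcases (step a b hab.1.1).2 hab.1.2 with ⟨_, hg⟩ | ⟨hge, _⟩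
      · exact hg
      · rw [hab.2] at hge; omega
    exact hG v (transgen_swap this)
  · have : Relation.TransGen G v v := by
      refine transGen_lift id (fun a b hab => ?_) h3
      rcases (step a b hab.1.1).2 hab.1.2 with ⟨hle, _⟩ | ⟨_, hg⟩
      · rw [hab.2] at hle; omega
      · exact hg
    exact hG v this

end Flips

section Compress

variable {V₂ : Type}

lemma ip_zero_right {κ : Type} [Fintype κ] (f : κ → ZMod 2) : ip f 0 = 0 := by
  simp [ip]

lemma ip_one {κ : Type} [Fintype κ] (f : κ → ZMod 2) :
    ip (fun _ => 1) f = ip f f := by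
  unfold ip
  refine Finset.sum_congr rfl fun j _ => ?_
  rw [one_mul, zsq]

/-- The master compression lemma. -/
lemma compress (D₂ : OGraph V₂) {m : ℕ} (b : V₂ → Fin m → ZMod 2)
    (hG : ∀ v, ¬ Relation.TransGen (flipRel D₂ (fun v w => ip (b v) (b w))) v v)
    (d₁ d₂ : Fin m → ZMod 2)
    (hdc₁ : ∀ v w, flipRel D₂ (fun v w => ip (b v) (b w)) w v →
      ip d₁ (b v) = 1 → ip d₁ (b w) = 1)
    (hdc₂ : ∀ v w, flipRel D₂ (fun v w => ip (b v) (b w)) w v →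
      ip d₂ (b v) = 1 → ip d₂ (b w) = 1)
    (x₀ : Fin m → ZMod 2)
    (hrad : ∀ q, ∑ p, x₀ p *
      ((if p = q then (1 : ZMod 2) else 0) + d₁ p * d₁ q + d₂ p * d₂ q) = 0)
    (pstar : Fin m)
    (hpstar : (if pstar = pstar then (1 : ZMod 2) else 0) +
      d₁ pstar * d₁ pstar + d₂ pstar * d₂ pstar = 1)
    (q₀ : Fin m) (hq₀ : x₀ q₀ = 1) (hne : q₀ ≠ pstar) :
    ∃ L' : List (Set V₂), L'.length + 1 = m ∧ (D₂.invertList L').Acyclic := by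
  set M : Fin m → Fin m → ZMod 2 :=
    fun p q => (if p = q then (1 : ZMod 2) else 0) + d₁ p * d₁ q + d₂ p * d₂ q with hM
  have hsymm : ∀ p q, M p q = M q p := by
    intro p q
    simp only [hM]
    by_cases h : p = q
    · subst h; ring
    · rw [if_neg h, if_neg (Ne.symm h)]; ring
  obtain ⟨B, C, hBcard, hsupC, hCC⟩ :=
    radical_real M hsymm x₀ (by intro q; exact hrad q) pstar hpstar q₀ hq₀ hne
  rw [Fintype.card_fin] at hBcard
  -- the compressed vectors
  set c : V₂ → Option (Fin m) → ZMod 2 :=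
    fun v j => ∑ p, b v p * C p j with hc
  -- Gram identity
  have key : ∀ v w, ip (c v) (c w) =
      ip (b v) (b w) + ip d₁ (b v) * ip d₁ (b w) + ip d₂ (b v) * ip d₂ (b w) := by
    intro v w
    have step1 : ip (c v) (c w) = ∑ p, ∑ q, (b v p * b w q) * ip (C p) (C q) := by
      unfold ip
      rw [show (∑ j, c v j * c w j) =
          ∑ j, ∑ p, ∑ q, (b v p * C p j) * (b w q * C q j) from
        Finset.sum_congr rfl fun j _ => by
          rw [hc]
          rw [Finset.sum_mul_sum]]
      rw [Finset.sum_comm]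
      refine Finset.sum_congr rfl fun p _ => ?_
      rw [Finset.sum_comm]
      refine Finset.sum_congr rfl fun q _ => ?_
      rw [Finset.mul_sum]
      refine Finset.sum_congr rfl fun j _ => ?_
      ring
    rw [step1]
    have step2 : ∀ p q, (b v p * b w q) * ip (C p) (C q) =
        b v p * b w q * (if p = q then (1:ZMod 2) else 0)
        + (b v p * d₁ p) * (b w q * d₁ q) + (b v p * d₂ p) * (b w q * d₂ q) := by
      intro p q
      rw [hCC p q]
      simp only [hM]
      ring
    rw [Finset.sum_congr rfl (fun p _ => Finset.sum_congr rfl fun q _ => step2 p q)]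
    rw [show (∑ p, ∑ q, (b v p * b w q * (if p = q then (1:ZMod 2) else 0)
        + (b v p * d₁ p) * (b w q * d₁ q) + (b v p * d₂ p) * (b w q * d₂ q)))
        = (∑ p, ∑ q, b v p * b w q * (if p = q then (1:ZMod 2) else 0))
        + (∑ p, ∑ q, (b v p * d₁ p) * (b w q * d₁ q))
        + (∑ p, ∑ q, (b v p * d₂ p) * (b w q * d₂ q)) from by
      rw [← Finset.sum_add_distrib, ← Finset.sum_add_distrib]
      refine Finset.sum_congr rfl fun p _ => ?_
      rw [← Finset.sum_add_distrib, ← Finset.sum_add_distrib]]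
    congr 1
    · congr 1
      · -- diagonal part
        unfold ip
        refine Finset.sum_congr rfl fun p _ => ?_
        rw [Finset.sum_eq_single p]
        · rw [if_pos rfl, mul_one]
        · intro q _ hq; rw [if_neg (Ne.symm hq), mul_zero]
        · intro h; exact absurd (Finset.mem_univ p) h
      · -- d₁ part
        rw [← Finset.sum_mul_sum]
        unfold ip
        congr 1
        · exact Finset.sum_congr rfl fun p _ => by ring
        · exact Finset.sum_congr rfl fun q _ => by ring
    · -- d₂ part
      rw [← Finset.sum_mul_sum]
      unfold ip
      congr 1
      · exact Finset.sum_congr rfl fun p _ => by ring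
      · exact Finset.sum_congr rfl fun q _ => by ring
  -- the list of sets
  set base : List (Set V₂) := B.toList.map (fun j => {v | c v j = 1}) with hbase
  set L' : List (Set V₂) := base ++ List.replicate (m - 1 - B.card) ∅ with hL'
  have hlen : L'.length + 1 = m := by
    rw [hL']
    rw [List.length_append, List.length_replicate, hbase, List.length_map,
      Finset.length_toList]
    omega
  refine ⟨L', hlen, ?_⟩
  -- flip parity of L'
  have hflip : ∀ v w, flipSum L' v w = ip (c v) (c w) := by
    intro v w
    rw [hL', flipSum_append]
    have hpad : flipSum (List.replicate (m - 1 - B.card) (∅ : Set V₂)) v w = 0 := by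
      unfold flipSum
      rw [List.map_replicate]
      have : ind (v ∈ (∅ : Set V₂) ∧ w ∈ (∅ : Set V₂)) = 0 :=
        ind_false (fun h => h.1)
      rw [this]
      simp
    rw [hpad, add_zero]
    unfold flipSum
    rw [hbase, List.map_map]
    rw [show (fun X => ind (v ∈ X ∧ w ∈ X)) ∘ (fun j => {v | c v j = 1}) =
        fun j => c v j * c w j from by
      funext j
      show ind (c v j = 1 ∧ c w j = 1) = _
      rw [ind_and, ind_eq_self, ind_eq_self]]
    rw [Finset.sum_map_toList]
    unfold ip
    refine Finset.sum_subset (Finset.subset_univ B) ?_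
    intro j _ hjB
    have hcv : c v j = 0 := by
      rw [hc]
      refine Finset.sum_eq_zero fun p _ => ?_
      have hCz : C p j = 0 := by
        by_contra h
        exact hjB (hsupC p j h)
      rw [hCz, mul_zero]
    rw [hcv, zero_mul]
  -- identify the new relation
  set OF : V₂ → V₂ → ZMod 2 := fun v w => ip (b v) (b w) with hOF
  set F' : V₂ → V₂ → ZMod 2 := fun v w =>
    ip d₁ (b v) * ip d₁ (b w) + ip d₂ (b v) * ip d₂ (b w) with hF'
  set S₁ : Set V₂ := {v | ip d₁ (b v) = 1} with hS₁
  set S₂ : Set V₂ := {v | ip d₂ (b v) = 1} with hS₂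
  have prodind : ∀ (x y : ZMod 2), x * y = ind (x = 1 ∧ y = 1) := by
    intro x y
    rcases z2cases x with h | h <;> rcases z2cases y with h' | h' <;>
      rw [h, h'] <;> unfold ind <;>
      simp
  have hFind : ∀ v w, F' v w = ind (v ∈ S₁ ∧ w ∈ S₁) + ind (v ∈ S₂ ∧ w ∈ S₂) := by
    intro v w
    have e1 : ip d₁ (b v) * ip d₁ (b w) = ind (v ∈ S₁ ∧ w ∈ S₁) := prodind _ _
    have e2 : ip d₂ (b v) * ip d₂ (b w) = ind (v ∈ S₂ ∧ w ∈ S₂) := prodind _ _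
    show ip d₁ (b v) * ip d₁ (b w) + ip d₂ (b v) * ip d₂ (b w) = _
    rw [e1, e2]
  have hGood := inv2_acyclic (flipRel D₂ (fun v w => ip (b v) (b w))) hG S₁ S₂
    hdc₁ hdc₂ F' hFind
  have hrel : ∀ v w, (D₂.invertList L').adj v w ↔
      ((F' v w = 1 ∧ flipRel D₂ (fun v w => ip (b v) (b w)) w v) ∨
       (F' v w ≠ 1 ∧ flipRel D₂ (fun v w => ip (b v) (b w)) v w)) := by
    intro v w
    rw [invertList_adj']
    have hfs : flipSum L' = fun v w => ip (b v) (b w) + F' v w := by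
      funext v w
      rw [hflip v w, key v w, hF']
      ring
    rw [hfs]
    exact flip_flip D₂ _ F' (fun v w => ip_comm _ _) v w
  intro v hv
  exact hGood v (transGen_lift id (fun x y hxy => (hrel x y).1 hxy) hv)

end Compress

section Main

variable {V₁ V₂ : Type}

lemma dijoin_member_bound (D₁ : OGraph V₁) (D₂ : OGraph V₂)
    (h₁ : D₁.inv = 2) (L : List (Set (V₁ ⊕ V₂)))
    (hL : ((D₁.dijoin D₂).invertList L).Acyclic) :
    ∃ L' : List (Set V₂), L'.length + 1 = L.length ∧ (D₂.invertList L').Acyclic := by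
  classical
  set x : (V₁ ⊕ V₂) → Fin L.length → ZMod 2 := memv L with hxdef
  set a : V₁ → Fin L.length → ZMod 2 := fun u => x (Sum.inl u) with ha
  set b : V₂ → Fin L.length → ZMod 2 := fun v => x (Sum.inr v) with hb
  set RF : (V₁ ⊕ V₂) → (V₁ ⊕ V₂) → Prop :=
    flipRel (D₁.dijoin D₂) (flipSum L) with hRF
  have hRFacyc : ∀ w, ¬ Relation.TransGen RF w w := by
    intro w hw
    exact hL w (transGen_lift id (fun p q hpq => (invertList_adj' L _ p q).2 hpq) hw)
  have hfs : ∀ w w', flipSum L w w' = ip (x w) (x w') := fun w w' => flipSum_eq_ip L w w'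
  have hcross1 : ∀ u v, ip (a u) (b v) ≠ 1 → RF (Sum.inl u) (Sum.inr v) := by
    intro u v h
    right
    exact ⟨by rw [hfs]; exact h, trivial⟩
  have hcross2 : ∀ u v, ip (a u) (b v) = 1 → RF (Sum.inr v) (Sum.inl u) := by
    intro u v h
    left
    exact ⟨by rw [hfs, ip_comm]; exact h, trivial⟩
  have hinl : ∀ u u', RF (Sum.inl u) (Sum.inl u') ↔
      ((ip (a u) (a u') = 1 ∧ D₁.adj u' u) ∨ (ip (a u) (a u') ≠ 1 ∧ D₁.adj u u')) := by
    intro u u'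
    rw [hRF]
    unfold flipRel
    rw [hfs]
    exact Iff.rfl
  have hGacyc : ∀ v, ¬ Relation.TransGen (flipRel D₂ (fun v w => ip (b v) (b w))) v v := by
    intro v hv
    apply hRFacyc (Sum.inr v)
    refine transGen_lift Sum.inr ?_ hv
    intro p q hpq
    rcases hpq with ⟨h1, h2⟩ | ⟨h1, h2⟩
    · exact Or.inl ⟨by rw [hfs]; exact h1, h2⟩
    · exact Or.inr ⟨by rw [hfs]; exact h1, h2⟩
  have hdcl : ∀ (d : Fin L.length → ZMod 2), ((∃ u, d = a u) ∨ d = (fun _ => 0)) →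
      ∀ v w, flipRel D₂ (fun v w => ip (b v) (b w)) w v →
        ip d (b v) = 1 → ip d (b w) = 1 := by
    intro d hd v w hGwv hv
    rcases hd with ⟨u, rfl⟩ | rfl
    · by_contra hw
      apply hRFacyc (Sum.inl u)
      have s1 : RF (Sum.inl u) (Sum.inr w) := hcross1 u w hw
      have s2 : RF (Sum.inr w) (Sum.inr v) := by
        rcases hGwv with ⟨h1, h2⟩ | ⟨h1, h2⟩
        · exact Or.inl ⟨by rw [hfs]; exact h1, h2⟩
        · exact Or.inr ⟨by rw [hfs]; exact h1, h2⟩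
      have s3 : RF (Sum.inr v) (Sum.inl u) := hcross2 u v hv
      exact Relation.TransGen.head s1
        (Relation.TransGen.head s2 (Relation.TransGen.single s3))
    · have : ip (fun _ => (0 : ZMod 2)) (b v) = 0 := by
        unfold ip; simp
      rw [this] at hv
      exact absurd hv (by decide)
  set one : Fin L.length → ZMod 2 := fun _ => 1 with hone
  by_cases hc1 : ∃ u, ip (a u) (a u) = 1 ∧ a u ≠ one
  · -- case (i) : an odd vector different from the all-ones vector
    obtain ⟨u, hq, hne1⟩ := hc1
    have hex : ∃ p, a u p = 0 := by
      by_contra h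
      push_neg at h
      apply hne1
      funext p
      rcases z2cases (a u p) with h' | h'
      · exact absurd h' (h p)
      · exact h'
    obtain ⟨pstar, hps⟩ := hex
    have hex0 : ∃ q₀, a u q₀ = 1 := by
      by_contra h
      push_neg at h
      have hz : a u = fun _ => 0 := funext fun p => (z2cases _).resolve_right (h p)
      rw [show ip (a u) (a u) = ∑ p, a u p * a u p from rfl] at hq
      rw [hz] at hq
      simp at hq
    obtain ⟨q₀, hq₀⟩ := hex0
    have hrad : ∀ qq, ∑ p, a u p * ((if p = qq then (1:ZMod 2) else 0)
        + a u p * a u qq + 0 * 0) = 0 := by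
      intro qq
      have e : ∀ p, a u p * ((if p = qq then (1:ZMod 2) else 0)
          + a u p * a u qq + 0 * 0)
          = (if p = qq then a u p else 0) + (a u p * a u p) * a u qq := by
        intro p
        by_cases h : p = qq
        · rw [if_pos h, if_pos h]; ring
        · rw [if_neg h, if_neg h]; ring
      rw [Finset.sum_congr rfl (fun p _ => e p), Finset.sum_add_distrib,
        Finset.sum_ite_eq' Finset.univ qq (a u), if_pos (Finset.mem_univ _),
        ← Finset.sum_mul,
        show (∑ p, a u p * a u p) = 1 from hq, one_mul, zaddself]
    have hpstar : (if pstar = pstar then (1:ZMod 2) else 0)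
        + a u pstar * a u pstar + 0 * 0 = 1 := by
      rw [if_pos rfl, hps]; ring
    have hneq : q₀ ≠ pstar := by
      intro h; rw [h, hps] at hq₀; exact absurd hq₀ (by decide)
    obtain ⟨L', hlen, hacyc⟩ := compress D₂ b hGacyc (a u) (fun _ => 0)
      (hdcl (a u) (Or.inl ⟨u, rfl⟩)) (hdcl (fun _ => 0) (Or.inr rfl))
      (a u) hrad pstar hpstar q₀ hq₀ hneq
    exact ⟨L', hlen, hacyc⟩
  · push_neg at hc1
    by_cases hc2 : ∃ u₀ u₁, ip (a u₀) (a u₀) = 1 ∧ a u₁ ≠ (fun _ => 0) ∧ a u₁ ≠ one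
    · -- case (ii)
      obtain ⟨u₀, u₁, hqa, hn0, hnone⟩ := hc2
      have honeeq : a u₀ = one := hc1 u₀ hqa
      have ha₀p : ∀ p, a u₀ p = 1 := fun p => by rw [honeeq]
      have heven : ip (a u₁) (a u₁) = 0 := by
        rcases z2cases (ip (a u₁) (a u₁)) with h | h
        · exact h
        · exact absurd (hc1 u₁ h) hnone
      have hsum1 : (∑ _p : Fin L.length, (1 : ZMod 2)) = 1 := by
        rw [show (∑ _p : Fin L.length, (1:ZMod 2)) = ∑ p, a u₀ p * a u₀ p from
          Finset.sum_congr rfl fun p _ => by rw [ha₀p p]; ring]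
        exact hqa
      have hsumev : (∑ p, a u₁ p) = 0 := by
        rw [show (∑ p, a u₁ p) = ∑ p, a u₁ p * a u₁ p from
          Finset.sum_congr rfl fun p _ => (zsq _).symm]
        exact heven
      have hrad : ∀ qq, ∑ p, a u₀ p * ((if p = qq then (1:ZMod 2) else 0)
          + a u₀ p * a u₀ qq + a u₁ p * a u₁ qq) = 0 := by
        intro qq
        have e : ∀ p, a u₀ p * ((if p = qq then (1:ZMod 2) else 0)
            + a u₀ p * a u₀ qq + a u₁ p * a u₁ qq)
            = (if p = qq then (1:ZMod 2) else 0) + 1 + a u₁ p * a u₁ qq := by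
          intro p
          rw [ha₀p p, ha₀p qq]
          by_cases h : p = qq
          · rw [if_pos h]; ring
          · rw [if_neg h]; ring
        rw [Finset.sum_congr rfl (fun p _ => e p), Finset.sum_add_distrib,
          Finset.sum_add_distrib, Finset.sum_ite_eq' Finset.univ qq
            (fun _ => (1:ZMod 2)), if_pos (Finset.mem_univ _), hsum1,
          ← Finset.sum_mul, hsumev, zero_mul, add_zero, zaddself]
      have hex1 : ∃ pstar, a u₁ pstar = 1 := by
        by_contra h
        push_neg at h
        exact hn0 (funext fun p => (z2cases _).resolve_right (h p))
      obtain ⟨pstar, hps1⟩ := hex1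
      have hpstar : (if pstar = pstar then (1:ZMod 2) else 0)
          + a u₀ pstar * a u₀ pstar + a u₁ pstar * a u₁ pstar = 1 := by
        rw [if_pos rfl, ha₀p pstar, hps1]; decide
      have hex0 : ∃ q₀, a u₁ q₀ = 0 := by
        by_contra h
        push_neg at h
        apply hnone
        funext p
        rcases z2cases (a u₁ p) with h' | h'
        · exact absurd h' (h p)
        · exact h'
      obtain ⟨q₀, hq0v⟩ := hex0
      have hq₀ : a u₀ q₀ = 1 := ha₀p q₀
      have hneq : q₀ ≠ pstar := by
        intro h; rw [h, hps1] at hq0v; exact absurd hq0v (by decide)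
      obtain ⟨L', hlen, hacyc⟩ := compress D₂ b hGacyc (a u₀) (a u₁)
        (hdcl (a u₀) (Or.inl ⟨u₀, rfl⟩)) (hdcl (a u₁) (Or.inl ⟨u₁, rfl⟩))
        (a u₀) hrad pstar hpstar q₀ hq₀ hneq
      exact ⟨L', hlen, hacyc⟩
    · by_cases hc3 : ∃ i j, ip (a i) (a j) = 1 ∧ a i ≠ one ∧ a j ≠ one
      · -- case (iv) : a flipped pair of even vectors
        obtain ⟨i, j, hpij, hi1, hj1⟩ := hc3
        have hqi : ip (a i) (a i) = 0 := by
          rcases z2cases (ip (a i) (a i)) with h | h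
          · exact h
          · exact absurd (hc1 i h) hi1
        have hqj : ip (a j) (a j) = 0 := by
          rcases z2cases (ip (a j) (a j)) with h | h
          · exact h
          · exact absurd (hc1 j h) hj1
        have hpji : (∑ p, a j p * a i p) = 1 := by
          rw [show (∑ p, a j p * a i p) = ip (a j) (a i) from rfl, ip_comm]
          exact hpij
        have hq₀ex : ∃ q₀, a i q₀ + a j q₀ = 1 := by
          by_contra h
          push_neg at h
          have heq : a i = a j := by
            funext p
            rcases z2cases (a i p) with h' | h' <;> rcases z2cases (a j p) with h'' | h''
            · rw [h', h'']
            · exact absurd (by rw [h', h'']; decide) (h p)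
            · exact absurd (by rw [h', h'']; decide) (h p)
            · rw [h', h'']
          rw [heq] at hpij
          rw [hqj] at hpij
          exact absurd hpij (by decide)
        obtain ⟨q₀, hq₀⟩ := hq₀ex
        have hpsex : ∃ pstar, a i pstar + a j pstar = 0 := by
          by_contra h
          push_neg at h
          have h1 : ∀ p, a i p + a j p = 1 := by
            intro p
            rcases z2cases (a i p + a j p) with h' | h'
            · exact absurd h' (h p)
            · exact h'
          have c1 : ∑ p, a i p * (a i p + a j p) = 1 := by
            rw [show (∑ p, a i p * (a i p + a j p))
                = ∑ p, (a i p * a i p + a i p * a j p) from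
              Finset.sum_congr rfl fun p _ => by ring, Finset.sum_add_distrib,
              show (∑ p, a i p * a i p) = 0 from hqi,
              show (∑ p, a i p * a j p) = 1 from hpij]
            decide
          have c2 : ∑ p, a i p * (a i p + a j p) = 0 := by
            have e2 : ∀ p, a i p * (a i p + a j p) = a i p * a i p := by
              intro p; rw [h1 p, mul_one]; exact (zsq _).symm
            rw [Finset.sum_congr rfl (fun p _ => e2 p)]
            exact hqi
          rw [c1] at c2
          exact absurd c2 (by decide)
        obtain ⟨pstar, hpsv⟩ := hpsex
        have hrad : ∀ qq, ∑ p, (a i p + a j p) * ((if p = qq then (1:ZMod 2) else 0)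
            + a i p * a i qq + a j p * a j qq) = 0 := by
          intro qq
          have e : ∀ p, (a i p + a j p) * ((if p = qq then (1:ZMod 2) else 0)
              + a i p * a i qq + a j p * a j qq)
              = (if p = qq then (a i p + a j p) else 0)
                + (a i p * a i p + a j p * a i p) * a i qq
                + (a i p * a j p + a j p * a j p) * a j qq := by
            intro p
            by_cases h : p = qq
            · rw [if_pos h, if_pos h]; ring
            · rw [if_neg h, if_neg h]; ring
          rw [Finset.sum_congr rfl (fun p _ => e p), Finset.sum_add_distrib,
            Finset.sum_add_distrib,
            Finset.sum_ite_eq' Finset.univ qq (fun p => a i p + a j p),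
            if_pos (Finset.mem_univ _), ← Finset.sum_mul, ← Finset.sum_mul,
            Finset.sum_add_distrib, Finset.sum_add_distrib,
            show (∑ p, a i p * a i p) = 0 from hqi,
            show (∑ p, a i p * a j p) = 1 from hpij,
            show (∑ p, a j p * a i p) = 1 from hpji,
            show (∑ p, a j p * a j p) = 0 from hqj]
          ring_nf
          rw [show (2:ZMod 2) = 0 from by decide]
          ring
        have hpstar : (if pstar = pstar then (1:ZMod 2) else 0)
            + a i pstar * a i pstar + a j pstar * a j pstar = 1 := by
          rw [if_pos rfl, zsq, zsq]
          rcases z2cases (a i pstar) with h | h <;>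
            rcases z2cases (a j pstar) with h' | h' <;>
            rw [h, h'] <;> first
              | decide
              | (exfalso
                 rw [h, h'] at hpsv
                 exact absurd hpsv (by decide))
        have hneq : q₀ ≠ pstar := by
          intro h
          rw [h, hpsv] at hq₀
          exact absurd hq₀ (by decide)
        obtain ⟨L', hlen, hacyc⟩ := compress D₂ b hGacyc (a i) (a j)
          (hdcl (a i) (Or.inl ⟨i, rfl⟩)) (hdcl (a j) (Or.inl ⟨j, rfl⟩))
          (fun p => a i p + a j p) hrad pstar hpstar q₀ hq₀ hneq
        exact ⟨L', hlen, hacyc⟩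
      · -- contradiction branches : D₁ would have inversion number ≤ 1
        exfalso
        push_neg at hc2 hc3
        by_cases hodd : ∃ u₀, ip (a u₀) (a u₀) = 1
        · -- everything is 0 or all-ones, and m is odd : a single inversion decycles D₁
          obtain ⟨u₀, hq0⟩ := hodd
          have h1 : a u₀ = one := hc1 u₀ hq0
          have hipoo : ip one one = 1 := h1 ▸ hq0
          have hall : ∀ u, a u = (fun _ => 0) ∨ a u = one := by
            intro u
            by_cases h : a u = (fun _ => 0)
            · exact Or.inl h
            · exact Or.inr (hc2 u₀ u hq0 h)
          set Z : Set V₁ := {u | a u = one} with hZ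
          have hiff : ∀ u u', (D₁.invert Z).adj u u' ↔ RF (Sum.inl u) (Sum.inl u') := by
            intro u u'
            by_cases hz : u ∈ Z ∧ u' ∈ Z
            · have hflip1 : ip (a u) (a u') = 1 := by
                rw [show a u = one from hz.1, show a u' = one from hz.2]
                exact hipoo
              constructor
              · rintro (⟨_, _, h⟩ | ⟨h2, _⟩)
                · exact (hinl u u').2 (Or.inl ⟨hflip1, h⟩)
                · rcases h2 with h2 | h2
                  · exact absurd hz.1 h2
                  · exact absurd hz.2 h2
              · intro h
                rcases (hinl u u').1 h with ⟨_, hadj⟩ | ⟨hne, _⟩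
                · exact Or.inl ⟨hz.1, hz.2, hadj⟩
                · exact absurd hflip1 hne
            · have hflip0 : ip (a u) (a u') ≠ 1 := by
                intro hp
                apply hz
                constructor
                · rcases hall u with h | h
                  · rw [h] at hp
                    rw [show ip (fun _ => (0:ZMod 2)) (a u') = 0 from by
                      unfold ip; simp] at hp
                    exact absurd hp (by decide)
                  · exact h
                · rcases hall u' with h | h
                  · rw [h] at hp
                    rw [show ip (a u) (fun _ => (0:ZMod 2)) = 0 from by
                      unfold ip; simp] at hp
                    exact absurd hp (by decide)
                  · exact h
              constructor
              · rintro (⟨h1', h2', _⟩ | ⟨_, h⟩)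
                · exact absurd ⟨h1', h2'⟩ hz
                · exact (hinl u u').2 (Or.inr ⟨hflip0, h⟩)
              · intro h
                rcases (hinl u u').1 h with ⟨he, _⟩ | ⟨_, hadj⟩
                · exact absurd he hflip0
                · refine Or.inr ⟨?_, hadj⟩
                  by_cases h' : u ∈ Z
                  · exact Or.inr (fun h'' => hz ⟨h', h''⟩)
                  · exact Or.inl h'
          have hacyc : (D₁.invert Z).Acyclic := by
            intro v hv
            apply hRFacyc (Sum.inl v)
            exact transGen_lift Sum.inl (fun p q hpq => (hiff p q).1 hpq) hv
          have hmem : 1 ∈ {n | ∃ L : List (Set V₁), L.length = n ∧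
              (D₁.invertList L).Acyclic} := ⟨[Z], rfl, hacyc⟩
          have := Nat.sInf_le hmem
          rw [show sInf {n | ∃ L : List (Set V₁), L.length = n ∧
              (D₁.invertList L).Acyclic} = D₁.inv from rfl, h₁] at this
          omega
        · -- no flips at all : D₁ is already acyclic
          push_neg at hodd
          have hflips0 : ∀ u u', ip (a u) (a u') ≠ 1 := by
            intro u u' hp
            by_cases hu : a u = one
            · rw [hu, ip_one] at hp
              exact hodd u' hp
            · have h' : a u' = one := hc3 u u' hp hu
              rw [h', ip_comm, ip_one] at hp
              exact hodd u hp
          have hacyc : D₁.Acyclic := by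
            intro v hv
            apply hRFacyc (Sum.inl v)
            refine transGen_lift Sum.inl (fun p q hpq => ?_) hv
            exact (hinl p q).2 (Or.inr ⟨hflips0 p q, hpq⟩)
          have hmem : 0 ∈ {n | ∃ L : List (Set V₁), L.length = n ∧
              (D₁.invertList L).Acyclic} := ⟨[], rfl, hacyc⟩
          have := Nat.sInf_le hmem
          rw [show sInf {n | ∃ L : List (Set V₁), L.length = n ∧
              (D₁.invertList L).Acyclic} = D₁.inv from rfl, h₁] at this
          omega

end Main

section Exists

lemma exists_decycling {V : Type} [Fintype V] (D : OGraph V) :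
    ∃ L : List (Set V), (D.invertList L).Acyclic := by
  classical
  set g : V → ℕ := fun v => ((Fintype.equivFin V) v : ℕ) with hg
  have hginj : Function.Injective g := by
    intro u v h
    exact (Fintype.equivFin V).injective (Fin.val_injective h)
  set P : Finset (V × V) :=
    Finset.univ.filter (fun p => D.adj p.1 p.2 ∧ g p.2 < g p.1) with hP
  set L : List (Set V) := P.toList.map (fun p => ({p.1, p.2} : Set V)) with hLdef
  have hPadj : ∀ p ∈ P, D.adj p.1 p.2 ∧ g p.2 < g p.1 := by
    intro p hp
    rw [hP] at hp
    exact (Finset.mem_filter.1 hp).2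
  have hsum : ∀ u v : V, u ≠ v → flipSum L u v =
      (if (u,v) ∈ P then (1 : ZMod 2) else 0) + (if (v,u) ∈ P then 1 else 0) := by
    intro u v huv
    unfold flipSum
    rw [hLdef, List.map_map]
    rw [show ((fun X => ind (u ∈ X ∧ v ∈ X)) ∘ (fun p : V × V => ({p.1, p.2} : Set V)))
        = fun p : V × V => ind (u ∈ ({p.1, p.2} : Set V) ∧ v ∈ ({p.1, p.2} : Set V))
        from rfl]
    rw [Finset.sum_map_toList]
    have e : ∀ p ∈ P, ind (u ∈ ({p.1, p.2} : Set V) ∧ v ∈ ({p.1, p.2} : Set V))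
        = (if p = (u,v) then (1:ZMod 2) else 0) + (if p = (v,u) then 1 else 0) := by
      intro p hp
      have hadj := (hPadj p hp).1
      have hne : p.1 ≠ p.2 := by
        intro h
        exact D.loopless p.2 (h ▸ hadj)
      by_cases h1 : p = (u, v)
      · rw [if_pos h1, if_neg (by
          intro h2
          rw [h1] at h2
          apply huv
          have := congrArg Prod.fst h2
          exact this)]
        rw [ind_true (by
          rw [h1]
          exact ⟨Set.mem_insert _ _, Set.mem_insert_of_mem _ rfl⟩)]
        decide
      · by_cases h2 : p = (v, u)
        · rw [if_neg h1, if_pos h2]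
          rw [ind_true (by
            rw [h2]
            exact ⟨Set.mem_insert_of_mem _ rfl, Set.mem_insert _ _⟩)]
          decide
        · rw [if_neg h1, if_neg h2]
          rw [ind_false, add_zero]
          rintro ⟨hu, hv⟩
          rcases hu with hu | hu <;> rcases hv with hv | hv
          · exact huv (hu.trans hv.symm)
          · rw [Set.mem_singleton_iff] at hv
            exact h1 (Prod.ext hu.symm hv.symm)
          · rw [Set.mem_singleton_iff] at hu
            exact h2 (Prod.ext hv.symm hu.symm)
          · rw [Set.mem_singleton_iff] at hu hv
            exact huv (hu.trans hv.symm)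
    rw [Finset.sum_congr rfl e, Finset.sum_add_distrib]
    rw [Finset.sum_ite_eq' P (u,v) (fun _ => (1:ZMod 2)),
      Finset.sum_ite_eq' P (v,u) (fun _ => (1:ZMod 2))]
  refine ⟨L, acyclic_of_strict_mono g ?_⟩
  intro u v h
  rw [invertList_adj'] at h
  have huv : u ≠ v := by
    rintro rfl
    rcases h with ⟨_, hadj⟩ | ⟨_, hadj⟩ <;> exact D.loopless _ hadj
  have hvu : (v, u) ∈ P → D.adj v u ∧ g u < g v := fun hm => (hPadj _ hm)
  have huvP : (u, v) ∈ P → D.adj u v ∧ g v < g u := fun hm => (hPadj _ hm)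
  rcases h with ⟨hf, hadj⟩ | ⟨hf, hadj⟩
  · -- flipped arc : original is v → u, so (v,u) must be the listed bad pair
    rw [hsum u v huv] at hf
    have h1 : (u, v) ∉ P := by
      intro hm
      exact D.asymm v u hadj (huvP hm).1
    rw [if_neg h1, zero_add] at hf
    by_cases h2 : (v, u) ∈ P
    · exact (hvu h2).2
    · rw [if_neg h2] at hf
      exact absurd hf (by decide)
  · -- non-flipped arc u → v : not a bad pair, so g u < g v
    rw [hsum u v huv] at hf
    have h2 : (v, u) ∉ P := by
      intro hm
      exact D.asymm u v hadj (hvu hm).1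
    rw [if_neg h2, add_zero] at hf
    have h1 : (u, v) ∉ P := by
      intro hm
      rw [if_pos hm] at hf
      exact hf rfl
    have : ¬ (g v < g u) := by
      intro hlt
      exact h1 (by
        rw [hP]
        exact Finset.mem_filter.2 ⟨Finset.mem_univ _, hadj, hlt⟩)
    have hne : g u ≠ g v := fun h => huv (hginj h)
    omega

end Exists

end
end InvAux

/-- For oriented graphs with `inv D₁ = 2` and `inv D₂ = k`,
`inv (D₁ → D₂) ≥ k + 1`. -/
theorem inv_dijoin_oriented_lower_bound {V₁ V₂ : Type} [Fintype V₁] [Fintype V₂]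
    (D₁ : OGraph V₁) (D₂ : OGraph V₂) (k : ℕ)
    (h₁ : D₁.inv = 2) (h₂ : D₂.inv = k) :
    k + 1 ≤ (D₁.dijoin D₂).inv := by
  classical
  have hne : {m | ∃ L : List (Set (V₁ ⊕ V₂)), L.length = m ∧
      ((D₁.dijoin D₂).invertList L).Acyclic}.Nonempty := by
    obtain ⟨L, hL⟩ := InvAux.exists_decycling (D₁.dijoin D₂)
    exact ⟨L.length, L, rfl, hL⟩
  obtain ⟨L, hlen, hacyc⟩ := Nat.sInf_mem hne
  obtain ⟨L', hlen', hacyc'⟩ := InvAux.dijoin_member_bound D₁ D₂ h₁ L hacyc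
  have hk : D₂.inv ≤ L'.length := Nat.sInf_le ⟨L', rfl, hacyc'⟩
  rw [h₂] at hk
  have hfin : (D₁.dijoin D₂).inv = L.length := hlen.symm
  omega
end
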